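/- arXiv:1802.06142 — 4 statements merged into one kernel-verified Lean document; each statement's English description precedes it below -/
import Mathlib

section
/- Let q ∈ (0,1) and let X ⊆ [0,∞) be a nonempty closed set with qX = X. Then there exists a σ-finite q-invariant Borel measure μ on [0,∞) whose support equals X; that is, μ([0,∞) \ X) = 0 and μ(U) > 0 for every open set U ⊆ [0,∞) with U ∩ X ≠ ∅. -/
open MeasureTheory Set Pointwise
open scoped ENNReal

/-- For every nonempty closed `q`-invariant subset `X` of `[0,∞)` there exists a σ-finite
`q`-invariant Borel measure on `[0,∞)` (modelled as a measure on `ℝ` vanishing on `(-∞,0)`)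
whose support is exactly `X`. -/
theorem exists_qInvariant_measure_support_eq
    (q : ℝ) (hq0 : 0 < q) (hq1 : q < 1)
    (X : Set ℝ) (hX0 : X ⊆ Set.Ici 0) (hXcl : IsClosed X)
    (hXne : X.Nonempty) (hXinv : q • X = X) :
    ∃ μ : Measure ℝ, SigmaFinite μ ∧ μ (Set.Iio 0) = 0 ∧
      (∀ M : Set ℝ, MeasurableSet M → M ⊆ Set.Ici 0 → μ (q • M) = μ M) ∧
      μ (Set.Ici 0 \ X) = 0 ∧
      ∀ U : Set ℝ, IsOpen U → (U ∩ X).Nonempty → 0 < μ U := by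
  classical
  have hq : q ≠ 0 := hq0.ne'
  -- forward and backward invariance of `X`
  have hmul : ∀ x ∈ X, q * x ∈ X := by
    intro x hx
    rw [← hXinv]
    exact ⟨x, hx, rfl⟩
  have hdiv : ∀ x ∈ X, q⁻¹ * x ∈ X := by
    intro x hx
    rw [← hXinv] at hx
    obtain ⟨y, hy, rfl⟩ := hx
    simpa [smul_eq_mul, inv_mul_cancel_left₀ hq] using hy
  have hzpow : ∀ x ∈ X, ∀ n : ℤ, q ^ n * x ∈ X := by
    intro x hx n
    induction n using Int.induction_on with
    | zero => simpa using hx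
    | succ k ih =>
        have h := hmul _ ih
        have he : q ^ ((k : ℤ) + 1) * x = q * (q ^ (k : ℤ) * x) := by
          rw [zpow_add_one₀ hq]; ring
        rw [he]; exact h
    | pred k ih =>
        have h := hdiv _ ih
        have he : q ^ (-(k : ℤ) - 1) * x = q⁻¹ * (q ^ (-(k : ℤ)) * x) := by
          rw [zpow_sub_one₀ hq]; ring
        rw [he]; exact h
  have h0X : (0 : ℝ) ∈ X := by
    obtain ⟨x, hx⟩ := hXne
    have hlim : Filter.Tendsto (fun n : ℕ => q ^ n * x) Filter.atTop (nhds 0) := by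
      have := (tendsto_pow_atTop_nhds_zero_of_lt_one hq0.le hq1).mul_const x
      simpa using this
    exact hXcl.mem_of_tendsto hlim (Filter.Eventually.of_forall fun n => by
      simpa using hzpow x hx (n : ℤ))
  -- a dense sequence in `X`
  haveI : Nonempty X := hXne.to_subtype
  obtain ⟨u, hu⟩ := TopologicalSpace.exists_dense_seq X
  set e : ℕ → ℝ := fun i => (u i : ℝ) with he
  have heX : ∀ i, e i ∈ X := fun i => (u i).2
  have hdense : ∀ x ∈ X, ∀ V : Set ℝ, IsOpen V → x ∈ V → ∃ i, e i ∈ V := by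
    intro x hx V hV hxV
    have h2 := mem_closure_iff.1 (hu ⟨x, hx⟩) (Subtype.val ⁻¹' V)
      (hV.preimage continuous_subtype_val) hxV
    obtain ⟨y, hyV, i, rfl⟩ := h2
    exact ⟨i, hyV⟩
  -- weights and the measure
  set w : ℕ → ℝ≥0∞ := fun i => if e i = 0 then 0 else 2⁻¹ ^ i with hw
  set μ : Measure ℝ :=
    Measure.dirac 0 + Measure.sum (fun p : ℕ × ℤ => w p.1 • Measure.dirac (q ^ p.2 * e p.1))
    with hμ
  have happ : ∀ s : Set ℝ, MeasurableSet s →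
      μ s = (if (0 : ℝ) ∈ s then 1 else 0) +
        ∑' p : ℕ × ℤ, w p.1 * (if q ^ p.2 * e p.1 ∈ s then 1 else 0) := by
    intro s hs
    rw [hμ, Measure.add_apply, Measure.sum_apply _ hs, Measure.dirac_apply' _ hs]
    simp only [Measure.smul_apply, Measure.dirac_apply' _ hs, smul_eq_mul,
      Set.indicator_apply, Pi.one_apply]
  have hwle : ∀ i, w i ≤ 2⁻¹ ^ i := by
    intro i; rw [hw]; dsimp only; split <;> simp
  have hwsum : ∑' i, w i < ⊤ := by
    refine lt_of_le_of_lt (ENNReal.tsum_le_tsum hwle) ?_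
    rw [ENNReal.tsum_geometric]
    rw [ENNReal.inv_lt_top, tsub_pos_iff_lt]
    norm_num
  have hkey : ∀ a : ℝ,
      (∑' p : ℕ × ℤ, w p.1 * (if q ^ p.2 * e p.1 ∈ ({a} : Set ℝ) then 1 else 0)) ≤
        ∑' i, w i := by
    intro a
    rw [ENNReal.tsum_prod']
    refine ENNReal.tsum_le_tsum fun i => ?_
    by_cases h0 : e i = 0
    · simp [hw, h0]
    by_cases hex : ∃ n : ℤ, q ^ n * e i = a
    · obtain ⟨n₀, hn₀⟩ := hex
      rw [tsum_eq_single n₀ ?_]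
      · simp [hn₀]
      · intro m hm
        have hne : q ^ m * e i ≠ a := by
          intro hc
          apply hm
          have heq : q ^ m * e i = q ^ n₀ * e i := by rw [hc, hn₀]
          exact zpow_right_injective₀ hq0 hq1.ne (mul_right_cancel₀ h0 heq)
        simp [hne]
    · push_neg at hex
      simp [hex]
  have hfin : ∀ a : ℝ, μ {a} < ⊤ := by
    intro a
    rw [happ _ (measurableSet_singleton a)]
    have h1 : (if (0 : ℝ) ∈ ({a} : Set ℝ) then (1 : ℝ≥0∞) else 0) ≤ 1 := by split <;> simp
    exact lt_of_le_of_lt (add_le_add h1 (hkey a))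
      (ENNReal.add_lt_top.2 ⟨ENNReal.one_lt_top, hwsum⟩)
  -- σ-finiteness
  have hsf : SigmaFinite μ := by
    set A : Set ℝ := insert 0 (Set.range fun p : ℕ × ℤ => q ^ p.2 * e p.1) with hA
    have hAc : A.Countable := (Set.countable_range _).insert 0
    refine Measure.sigmaFinite_of_countable
      (S := insert Aᶜ ((fun a => ({a} : Set ℝ)) '' A)) ?_ ?_ ?_
    · exact (hAc.image _).insert _
    · rintro s (rfl | ⟨a, _, rfl⟩)
      · have hAm : MeasurableSet Aᶜ := hAc.measurableSet.compl
        rw [happ _ hAm]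
        have h0 : (0 : ℝ) ∉ Aᶜ := fun h => h (Set.mem_insert _ _)
        rw [if_neg h0, zero_add]
        refine lt_of_le_of_lt (le_of_eq (ENNReal.tsum_eq_zero.2 fun p => ?_))
          ENNReal.zero_lt_top
        have : q ^ p.2 * e p.1 ∈ A := Set.mem_insert_of_mem _ ⟨p, rfl⟩
        simp [this]
      · exact hfin a
    · rw [Set.sUnion_insert, Set.sUnion_image]
      have : ⋃ a ∈ A, ({a} : Set ℝ) = A := Set.biUnion_of_singleton A
      rw [this, Set.compl_union_self]
  -- vanishing on the negative half-line
  have hIio : μ (Set.Iio 0) = 0 := by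
    rw [happ _ measurableSet_Iio]
    have h0 : (0 : ℝ) ∉ Set.Iio 0 := by simp
    rw [if_neg h0, zero_add]
    refine ENNReal.tsum_eq_zero.2 fun p => ?_
    have hnn : (0 : ℝ) ≤ q ^ p.2 * e p.1 :=
      mul_nonneg (zpow_nonneg hq0.le _) (Set.mem_Ici.1 (hX0 (heX p.1)))
    simp [Set.mem_Iio, not_lt.2 hnn]
  -- q-invariance
  have hinv : ∀ M : Set ℝ, MeasurableSet M → μ (q • M) = μ M := by
    intro M hM
    have hMq : MeasurableSet (q • M) := hM.const_smul₀ q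
    rw [happ _ hMq, happ _ hM]
    congr 1
    · have h0 : (0 : ℝ) ∈ q • M ↔ (0 : ℝ) ∈ M := Set.zero_mem_smul_set_iff hq
      simp [h0]
    · have hmem : ∀ p : ℕ × ℤ, (q ^ p.2 * e p.1 ∈ q • M ↔ q ^ (p.2 - 1) * e p.1 ∈ M) := by
        rintro ⟨i, n⟩
        have h1 : q ^ n * e i = q • (q ^ (n - 1) * e i) := by
          rw [smul_eq_mul, ← mul_assoc, ← zpow_one_add₀ hq]
          have : (1 + (n - 1) : ℤ) = n := by ring
          rw [this]
        dsimp only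
        rw [h1, smul_mem_smul_set_iff₀ hq]
      calc (∑' p : ℕ × ℤ, w p.1 * (if q ^ p.2 * e p.1 ∈ q • M then 1 else 0))
          = ∑' p : ℕ × ℤ, w p.1 * (if q ^ (p.2 - 1) * e p.1 ∈ M then 1 else 0) :=
            tsum_congr fun p => by rw [hmem p]
        _ = ∑' p : ℕ × ℤ, w p.1 * (if q ^ p.2 * e p.1 ∈ M then 1 else 0) := by
            have h2 := ((Equiv.refl ℕ).prodCongr (Equiv.addRight (1 : ℤ))).tsum_eq
              (fun p : ℕ × ℤ => w p.1 * (if q ^ (p.2 - 1) * e p.1 ∈ M then 1 else 0))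
            simp only [Equiv.prodCongr_apply, Equiv.coe_refl, Prod.map, id_eq,
              Equiv.coe_addRight, add_sub_cancel_right] at h2
            exact h2.symm
  -- vanishing outside X
  have hdiff : μ (Set.Ici 0 \ X) = 0 := by
    rw [happ _ (measurableSet_Ici.diff hXcl.measurableSet)]
    rw [if_neg (fun h : (0:ℝ) ∈ Set.Ici 0 \ X => h.2 h0X), zero_add]
    refine ENNReal.tsum_eq_zero.2 fun p => ?_
    by_cases h0i : e p.1 = 0
    · simp [hw, h0i]
    · have hmemX : q ^ p.2 * e p.1 ∈ X := hzpow _ (heX p.1) p.2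
      have : q ^ p.2 * e p.1 ∉ Set.Ici 0 \ X := fun h => h.2 hmemX
      simp [this]
  -- positivity on open sets meeting X
  have hsupp : ∀ U : Set ℝ, IsOpen U → (U ∩ X).Nonempty → 0 < μ U := by
    intro U hU h
    obtain ⟨x, hxU, hxX⟩ := h
    rw [happ _ hU.measurableSet]
    by_cases hx0 : x = 0
    · subst hx0
      rw [if_pos hxU]
      exact lt_of_lt_of_le zero_lt_one le_self_add
    · obtain ⟨i, hiU, hi0⟩ : ∃ i, e i ∈ U ∧ e i ≠ 0 := by
        obtain ⟨i, hi⟩ := hdense x hxX (U ∩ {(0:ℝ)}ᶜ)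
          (hU.inter isOpen_compl_singleton) ⟨hxU, hx0⟩
        exact ⟨i, hi.1, hi.2⟩
      refine lt_of_lt_of_le ?_ le_add_self
      refine lt_of_lt_of_le ?_ (ENNReal.le_tsum ((i, 0) : ℕ × ℤ))
      have h00 : q ^ ((0:ℕ×ℤ).2) * e i = e i := by norm_num
      dsimp only
      rw [zpow_zero, one_mul, if_pos hiU, mul_one, hw]
      dsimp only
      rw [if_neg hi0]
      exact ENNReal.pow_pos (ENNReal.inv_pos.2 (by norm_num)) i
  exact ⟨μ, hsf, hIio, fun M hM _ => hinv M hM, hdiff, hsupp⟩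
end

section
/- Let q ∈ (0,1), let μ be a q-invariant Borel measure on [0,∞), and let ζ be the model operator on L²([0,∞), μ; ℂ) with domain D(ζ) = {f ∈ L² : ∫ x² |f(x)|² dμ(x) < ∞} and (ζ f)(x) = q x f(qx). Then the adjoint ζ* of ζ is the operator with the same domain D(ζ* ) = {g ∈ L² : ∫ x² |g(x)|² dμ(x) < ∞} given by (ζ* g)(x) = x g(q⁻¹ x). -/
open MeasureTheory Set Pointwise

lemma qnma_map_eq (q : ℝ) (hq0 : 0 < q)
    (μ : Measure ℝ) (hμneg : μ (Set.Iio 0) = 0)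
    (hμinv : ∀ M : Set ℝ, MeasurableSet M → M ⊆ Set.Ici 0 → μ (q • M) = μ M) :
    Measure.map (fun x : ℝ => q * x) μ = μ := by
  have key : ∀ A : Set ℝ, μ A = μ (A ∩ Set.Ici 0) := by
    intro A
    have h1 : μ (A \ Set.Ici 0) = 0 :=
      measure_mono_null (fun x hx => by simpa [Set.mem_Iio] using not_le.mp hx.2) hμneg
    have h2 : μ A ≤ μ (A ∩ Set.Ici 0) := by
      calc μ A = μ ((A ∩ Set.Ici 0) ∪ (A \ Set.Ici 0)) := by
            rw [Set.inter_union_diff A (Set.Ici 0)]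
        _ ≤ μ (A ∩ Set.Ici 0) + μ (A \ Set.Ici 0) := measure_union_le _ _
        _ = μ (A ∩ Set.Ici 0) := by rw [h1, add_zero]
    exact le_antisymm h2 (measure_mono Set.inter_subset_left)
  ext s hs
  rw [Measure.map_apply (measurable_const_mul q) hs]
  set P := (fun x : ℝ => q * x) ⁻¹' s with hP
  have hPm : MeasurableSet (P ∩ Set.Ici 0) :=
    (measurable_const_mul q hs).inter measurableSet_Ici
  have hPi : P ∩ Set.Ici 0 = (fun x : ℝ => q * x) ⁻¹' (s ∩ Set.Ici 0) := by
    ext x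
    simp only [Set.mem_inter_iff, Set.mem_preimage, Set.mem_Ici, hP]
    exact and_congr_right fun _ => (mul_nonneg_iff_of_pos_left hq0).symm
  have himg : q • (P ∩ Set.Ici 0) = s ∩ Set.Ici 0 := by
    rw [hPi]
    have : q • ((fun x : ℝ => q * x) ⁻¹' (s ∩ Set.Ici 0))
        = (fun x : ℝ => q * x) '' ((fun x : ℝ => q * x) ⁻¹' (s ∩ Set.Ici 0)) := by
      ext y; simp [Set.mem_smul_set, smul_eq_mul]
    rw [this, Set.image_preimage_eq _ (fun y => ⟨q⁻¹ * y, by field_simp⟩)]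
  have := hμinv (P ∩ Set.Ici 0) hPm Set.inter_subset_right
  rw [himg] at this
  rw [key P, ← this, ← key s]

/-- The adjoint of the model operator `(ζ f)(x) = q x f(qx)` on `L²([0,∞), μ; ℂ)` with
domain `{f : ∫ x²|f|² dμ < ∞}` has the same domain and acts by `(ζ* g)(x) = x g(q⁻¹ x)`. -/
theorem qNormal_model_adjoint
    (q : ℝ) (hq0 : 0 < q) (hq1 : q < 1)
    (μ : Measure ℝ) (hμneg : μ (Set.Iio 0) = 0)
    (hμinv : ∀ M : Set ℝ, MeasurableSet M → M ⊆ Set.Ici 0 → μ (q • M) = μ M)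
    (ζ : Lp ℂ 2 μ →ₗ.[ℂ] Lp ℂ 2 μ)
    (hdense : Dense (ζ.domain : Set (Lp ℂ 2 μ)))
    (hdom : ∀ f : Lp ℂ 2 μ,
      f ∈ ζ.domain ↔ ∫⁻ x, ENNReal.ofReal (x ^ 2 * ‖f x‖ ^ 2) ∂μ < ⊤)
    (hact : ∀ f : ζ.domain,
      (ζ f : ℝ → ℂ) =ᵐ[μ] fun x => ((q * x : ℝ) : ℂ) * (f : Lp ℂ 2 μ) (q * x)) :
    (∀ g : Lp ℂ 2 μ,
      g ∈ ζ.adjoint.domain ↔ ∫⁻ x, ENNReal.ofReal (x ^ 2 * ‖g x‖ ^ 2) ∂μ < ⊤) ∧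
    (∀ g : ζ.adjoint.domain,
      (ζ.adjoint g : ℝ → ℂ) =ᵐ[μ] fun x => (x : ℂ) * (g : Lp ℂ 2 μ) (q⁻¹ * x)) := by
  have hqne : q ≠ 0 := hq0.ne'
  -- measure invariance
  have hmap : Measure.map (fun x : ℝ => q * x) μ = μ := qnma_map_eq q hq0 μ hμneg hμinv
  have hmap' : Measure.map (fun x : ℝ => q⁻¹ * x) μ = μ := by
    have h2 : Measure.map (fun x : ℝ => q⁻¹ * x) (Measure.map (fun x : ℝ => q * x) μ) = μ := by
      rw [Measure.map_map (measurable_const_mul _) (measurable_const_mul _)]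
      have : ((fun x : ℝ => q⁻¹ * x) ∘ fun x : ℝ => q * x) = id := by
        funext x; simp [Function.comp, inv_mul_cancel_left₀ hqne]
      rw [this, Measure.map_id]
    rwa [hmap] at h2
  have embq : MeasurableEmbedding (fun x : ℝ => q * x) := by
    have := (Homeomorph.mulLeft₀ q hqne).measurableEmbedding
    simpa [Homeomorph.coe_mulLeft₀] using this
  have embq' : MeasurableEmbedding (fun x : ℝ => q⁻¹ * x) := by
    have := (Homeomorph.mulLeft₀ q⁻¹ (inv_ne_zero hqne)).measurableEmbedding
    simpa [Homeomorph.coe_mulLeft₀] using this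
  -- substitution lemmas
  have subL : ∀ f : ℝ → ENNReal, ∫⁻ x, f (q * x) ∂μ = ∫⁻ x, f x ∂μ := by
    intro f
    calc ∫⁻ x, f (q * x) ∂μ = ∫⁻ x, f x ∂(Measure.map (fun x : ℝ => q * x) μ) :=
          (embq.lintegral_map f).symm
      _ = ∫⁻ x, f x ∂μ := by rw [hmap]
  have subI : ∀ f : ℝ → ℂ, ∫ x, f (q * x) ∂μ = ∫ x, f x ∂μ := by
    intro f
    calc ∫ x, f (q * x) ∂μ = ∫ x, f x ∂(Measure.map (fun x : ℝ => q * x) μ) :=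
          (embq.integral_map f).symm
      _ = ∫ x, f x ∂μ := by rw [hmap]
    -- the candidate adjoint function
  set v : Lp ℂ 2 μ → ℝ → ℂ := fun g x => (x : ℂ) * g (q⁻¹ * x) with hv
  have hvmeas : ∀ g : Lp ℂ 2 μ, StronglyMeasurable (v g) := fun g =>
    Complex.continuous_ofReal.stronglyMeasurable.mul
      ((Lp.stronglyMeasurable g).comp_measurable (measurable_const_mul q⁻¹))
  have hW : ∀ g : Lp ℂ 2 μ,
      ∫⁻ x, ENNReal.ofReal (‖v g x‖ ^ 2) ∂μ
        = ENNReal.ofReal (q ^ 2) * ∫⁻ x, ENNReal.ofReal (x ^ 2 * ‖g x‖ ^ 2) ∂μ := by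
    intro g
    rw [← subL (fun x => ENNReal.ofReal (‖v g x‖ ^ 2)),
      ← lintegral_const_mul' _ _ ENNReal.ofReal_ne_top]
    refine lintegral_congr fun x => ?_
    have hx : v g (q * x) = ((q * x : ℝ) : ℂ) * g x := by
      simp [hv, inv_mul_cancel_left₀ hqne]
    rw [hx, ← ENNReal.ofReal_mul (by positivity)]
    congr 1
    rw [norm_mul, Complex.norm_real, Real.norm_eq_abs, mul_pow, sq_abs]
    ring
  have hWiff : ∀ g : Lp ℂ 2 μ,
      ((∫⁻ x, ENNReal.ofReal (‖v g x‖ ^ 2) ∂μ < ⊤)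
        ↔ (∫⁻ x, ENNReal.ofReal (x ^ 2 * ‖g x‖ ^ 2) ∂μ < ⊤)) := by
    intro g
    rw [hW g]
    constructor
    · intro h
      refine ENNReal.lt_top_of_mul_ne_top_right h.ne ?_
      simp only [ne_eq, ENNReal.ofReal_eq_zero, not_le]
      positivity
    · intro h
      exact ENNReal.mul_lt_top ENNReal.ofReal_lt_top h
  have hfin : ∀ u : ℝ → ℂ, AEStronglyMeasurable u μ →
      (MemLp u 2 μ ↔ ∫⁻ x, ENNReal.ofReal (‖u x‖ ^ 2) ∂μ < ⊤) := by
    intro u hu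
    rw [memLp_two_iff_integrable_sq_norm hu]
    have hm : AEStronglyMeasurable (fun x => ‖u x‖ ^ 2) μ := by
      have : (fun x => ‖u x‖ ^ 2) = fun x => ‖u x‖ * ‖u x‖ := by funext x; ring
      rw [this]; exact hu.norm.mul hu.norm
    rw [Integrable, and_iff_right hm,
      hasFiniteIntegral_iff_ofReal (Filter.Eventually.of_forall fun x => sq_nonneg _)]
    -- key inner product identity
  have hkey : ∀ (g : Lp ℂ 2 μ) (f : ζ.domain),
      (inner ℂ g (ζ f) : ℂ) = ∫ x, (starRingEnd ℂ) (v g x) * (f : Lp ℂ 2 μ) x ∂μ := by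
    intro g f
    rw [L2.inner_def]
    have h1 : ∫ x, (inner ℂ (g x) ((ζ f : Lp ℂ 2 μ) x) : ℂ) ∂μ
        = ∫ x, (starRingEnd ℂ) (g x) * (((q * x : ℝ) : ℂ) * (f : Lp ℂ 2 μ) (q * x)) ∂μ := by
      refine integral_congr_ae ?_
      filter_upwards [hact f] with x hx
      rw [RCLike.inner_apply', hx]
    rw [h1]
    have h3 := subI (fun y => (starRingEnd ℂ) (g (q⁻¹ * y)) * ((y : ℂ) * (f : Lp ℂ 2 μ) y))
    refine Eq.trans ?_ (Eq.trans h3 ?_)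
    · refine integral_congr_ae (Filter.Eventually.of_forall fun x => ?_)
      simp only [inv_mul_cancel_left₀ hqne]
    · refine integral_congr_ae (Filter.Eventually.of_forall fun x => ?_)
      simp only [hv, map_mul, Complex.conj_ofReal]
      ring
  -- membership: sufficient condition
  have hmem : ∀ g : Lp ℂ 2 μ, (∫⁻ x, ENNReal.ofReal (x ^ 2 * ‖g x‖ ^ 2) ∂μ < ⊤) →
      g ∈ ζ.adjoint.domain := by
    intro g hg
    have hv2 : MemLp (v g) 2 μ :=
      (hfin (v g) (hvmeas g).aestronglyMeasurable).mpr ((hWiff g).mpr hg)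
    refine LinearPMap.mem_adjoint_domain_of_exists _ ⟨hv2.toLp (v g), fun f => ?_⟩
    rw [hkey g f, L2.inner_def]
    refine integral_congr_ae ?_
    filter_upwards [hv2.coeFn_toLp] with x hx
    rw [RCLike.inner_apply', hx]
  have hzsq : ∀ z : ℂ, ((‖z‖ ^ 2 : ℝ) : ℂ) = (starRingEnd ℂ) z * z := fun z => by
    rw [mul_comm, Complex.mul_conj, Complex.normSq_eq_norm_sq]
  -- the hard direction: a.e. identification of the adjoint
  have hard : ∀ (g : Lp ℂ 2 μ) (hg : g ∈ ζ.adjoint.domain),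
      ((ζ.adjoint ⟨g, hg⟩ : Lp ℂ 2 μ) : ℝ → ℂ) =ᵐ[μ] v g := by
    intro g hg
    set h : Lp ℂ 2 μ := ζ.adjoint ⟨g, hg⟩ with hh
    have hform : ∀ f : ζ.domain, (inner ℂ h (f : Lp ℂ 2 μ) : ℂ) = inner ℂ g (ζ f) :=
      fun f => LinearPMap.adjoint_isFormalAdjoint hdense ⟨g, hg⟩ f
    have hGQ : MemLp (fun x => g (q⁻¹ * x)) 2 μ :=
      (Lp.memLp g).comp_measurePreserving ⟨measurable_const_mul q⁻¹, hmap'⟩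
    have htr : ∀ n : ℕ, ∀ᵐ x ∂μ, x ∈ Set.Icc (0:ℝ) (n:ℝ) → (h : ℝ → ℂ) x = v g x := by
      intro n
      set A : Set ℝ := Set.Icc (0:ℝ) (n:ℝ) with hA
      have hAm : MeasurableSet A := measurableSet_Icc
      set d : ℝ → ℂ := A.indicator (fun x => (h : ℝ → ℂ) x - v g x) with hd
      have hdm : StronglyMeasurable d :=
        ((Lp.stronglyMeasurable h).sub (hvmeas g)).indicator hAm
      have hvA : MemLp (A.indicator (v g)) 2 μ := by
        refine MemLp.of_le_mul (c := (n : ℝ)) hGQ ((hvmeas g).indicator hAm).aestronglyMeasurable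
          (Filter.Eventually.of_forall fun x => ?_)
        by_cases hx : x ∈ A
        · rw [Set.indicator_of_mem hx]
          simp only [hv, norm_mul, Complex.norm_real, Real.norm_eq_abs,
            abs_of_nonneg hx.1]
          exact mul_le_mul_of_nonneg_right hx.2 (norm_nonneg _)
        · rw [Set.indicator_of_notMem hx]
          simp only [norm_zero]
          positivity
      have hdmem : MemLp d 2 μ := by
        have hsplit : d = fun x => A.indicator (h : ℝ → ℂ) x - A.indicator (v g) x := by
          funext x
          by_cases hx : x ∈ A <;>
            simp [hd, Set.indicator_of_mem, Set.indicator_of_notMem, hx]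
        rw [hsplit]
        exact ((Lp.memLp h).indicator hAm).sub hvA
      set fd : Lp ℂ 2 μ := hdmem.toLp d with hfd
      have hfdcoe : (fd : ℝ → ℂ) =ᵐ[μ] d := hdmem.coeFn_toLp
      have hfdm : fd ∈ ζ.domain := by
        rw [hdom]
        have hle : ∫⁻ x, ENNReal.ofReal (x ^ 2 * ‖(fd : ℝ → ℂ) x‖ ^ 2) ∂μ
            ≤ ENNReal.ofReal ((n : ℝ) ^ 2) * ∫⁻ x, ENNReal.ofReal (‖d x‖ ^ 2) ∂μ := by
          rw [← lintegral_const_mul' _ _ ENNReal.ofReal_ne_top]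
          refine lintegral_mono_ae ?_
          filter_upwards [hfdcoe] with x hx
          rw [hx, ← ENNReal.ofReal_mul (by positivity)]
          refine ENNReal.ofReal_le_ofReal ?_
          by_cases hxA : x ∈ A
          · have hx2 : x ^ 2 ≤ (n : ℝ) ^ 2 := by nlinarith [hxA.1, hxA.2]
            exact mul_le_mul_of_nonneg_right hx2 (sq_nonneg _)
          · simp [hd, Set.indicator_of_notMem hxA]
        have hfin' := (hfin d hdm.aestronglyMeasurable).mp hdmem
        exact lt_of_le_of_lt hle (ENNReal.mul_lt_top ENNReal.ofReal_lt_top hfin')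
      -- integrability facts
      have i1 : Integrable (fun x => (starRingEnd ℂ) ((h : ℝ → ℂ) x) * (fd : ℝ → ℂ) x) μ := by
        have := L2.integrable_inner (𝕜 := ℂ) h fd
        simpa only [RCLike.inner_apply'] using this
      have i2 : Integrable (fun x => (starRingEnd ℂ) (v g x) * (fd : ℝ → ℂ) x) μ := by
        set VA : Lp ℂ 2 μ := hvA.toLp _ with hVA
        have := L2.integrable_inner (𝕜 := ℂ) VA fd
        simp only [RCLike.inner_apply'] at this
        refine this.congr ?_
        filter_upwards [hvA.coeFn_toLp, hfdcoe] with x hx1 hx2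
        rw [hx1, hx2]
        by_cases hxA : x ∈ A
        · rw [Set.indicator_of_mem hxA]
        · rw [Set.indicator_of_notMem hxA, hd, Set.indicator_of_notMem hxA,
            mul_zero, mul_zero]
      -- the inner products agree
      have hips : ∫ x, (starRingEnd ℂ) ((h : ℝ → ℂ) x) * (fd : ℝ → ℂ) x ∂μ
          = ∫ x, (starRingEnd ℂ) (v g x) * (fd : ℝ → ℂ) x ∂μ := by
        have e1 : (inner ℂ h fd : ℂ) = ∫ x, (starRingEnd ℂ) ((h : ℝ → ℂ) x) * (fd : ℝ → ℂ) x ∂μ := by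
          rw [L2.inner_def]
          refine integral_congr_ae (Filter.Eventually.of_forall fun x => ?_)
          simp only [RCLike.inner_apply']
        rw [← e1, hform ⟨fd, hfdm⟩, hkey g ⟨fd, hfdm⟩]
      have hzero : ∫ x, ((starRingEnd ℂ) ((h : ℝ → ℂ) x) - (starRingEnd ℂ) (v g x))
          * (fd : ℝ → ℂ) x ∂μ = 0 := by
        have : (fun x => ((starRingEnd ℂ) ((h : ℝ → ℂ) x) - (starRingEnd ℂ) (v g x))
            * (fd : ℝ → ℂ) x)
            = fun x => (starRingEnd ℂ) ((h : ℝ → ℂ) x) * (fd : ℝ → ℂ) x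
              - (starRingEnd ℂ) (v g x) * (fd : ℝ → ℂ) x := by
          funext x; ring
        rw [this, integral_sub i1 i2, hips, sub_self]
      -- rewrite the integrand as a nonnegative real function
      have hreal : ∫ x, ((‖d x‖ ^ 2 : ℝ) : ℂ) ∂μ = 0 := by
        rw [← hzero]
        refine integral_congr_ae ?_
        filter_upwards [hfdcoe] with x hx
        by_cases hxA : x ∈ A
        · rw [hx, hd, Set.indicator_of_mem hxA, ← map_sub]
          exact hzsq _
        · rw [hx, hd, Set.indicator_of_notMem hxA]
          simp
      have hint : Integrable (fun x => ‖d x‖ ^ 2) μ :=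
        (memLp_two_iff_integrable_sq_norm hdm.aestronglyMeasurable).mp hdmem
      have hr0 : ∫ x, ‖d x‖ ^ 2 ∂μ = 0 := by
        have h5 : ∫ x, ((‖d x‖ ^ 2 : ℝ) : ℂ) ∂μ = ((∫ x, ‖d x‖ ^ 2 ∂μ : ℝ) : ℂ) :=
          integral_ofReal
        have h4 : ((∫ x, ‖d x‖ ^ 2 ∂μ : ℝ) : ℂ) = 0 := by rw [← h5]; exact hreal
        exact_mod_cast h4
      have hae0 := (integral_eq_zero_iff_of_nonneg (fun x => sq_nonneg _) hint).mp hr0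
      filter_upwards [hae0] with x hx hxA
      have hd0 : d x = 0 := by
        have : ‖d x‖ ^ 2 = 0 := hx
        have : ‖d x‖ = 0 := by nlinarith [norm_nonneg (d x), sq_nonneg (‖d x‖)]
        exact norm_eq_zero.mp this
      rw [hd, Set.indicator_of_mem hxA] at hd0
      exact sub_eq_zero.mp hd0
    have h0 : ∀ᵐ x ∂μ, (0:ℝ) ≤ x := by
      rw [ae_iff]
      have hset : {x : ℝ | ¬ (0:ℝ) ≤ x} = Set.Iio 0 := by ext x; simp
      rw [hset]; exact hμneg
    have hall := (ae_all_iff).mpr htr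
    filter_upwards [hall, h0] with x hx hx0
    exact hx ⌈x⌉₊ ⟨hx0, Nat.le_ceil x⟩
  -- assemble
  refine ⟨fun g => ⟨fun hg => ?_, hmem g⟩, fun g => ?_⟩
  · have hae := hard g hg
    have hv2 : MemLp (v g) 2 μ := (Lp.memLp (ζ.adjoint ⟨g, hg⟩)).ae_eq hae
    exact (hWiff g).mp ((hfin (v g) (hvmeas g).aestronglyMeasurable).mp hv2)
  · obtain ⟨g, hg⟩ := g
    exact hard g hg
end

section
/- Let q ∈ (0,1), let μ be a q-invariant Borel measure on [0,∞), and let ζ be the model operator on L²([0,∞), μ; ℂ) with domain D(ζ) = {f ∈ L² : ∫ x² |f(x)|² dμ(x) < ∞} and (ζ f)(x) = q x f(qx). Then ζ is a closed operator and satisfies the q-normality relation ζ ζ* = q² ζ* ζ as an equality of unbounded operators; in particular the domains coincide: D(ζ ζ*) = D(ζ* ζ) = {f ∈ L² : ∫ x⁴ |f(x)|² dμ(x) < ∞}, and on this common domain ζ(ζ* f) = q² ζ*(ζ f). -/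
open MeasureTheory Set Pointwise
open scoped ENNReal NNReal ComplexConjugate

namespace QNM

variable {μ : Measure ℝ}

lemma measure_union_null_right {A B : Set ℝ} (hB : μ B = 0) : μ (A ∪ B) = μ A :=
  le_antisymm ((measure_union_le _ _).trans (by rw [hB, add_zero])) (measure_mono Set.subset_union_left)

lemma smul_inv_invariant {c : ℝ} (hc : 0 < c)
    (hμinv : ∀ M : Set ℝ, MeasurableSet M → M ⊆ Set.Ici 0 → μ (c • M) = μ M)
    (M : Set ℝ) (hM : MeasurableSet M) (hMs : M ⊆ Set.Ici 0) :
    μ (c⁻¹ • M) = μ M := by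
  have h1 : c⁻¹ • M = (fun x : ℝ => c * x) ⁻¹' M := by
    ext x
    simp [Set.mem_smul_set_iff_inv_smul_mem₀ (inv_ne_zero hc.ne'), smul_eq_mul, inv_inv]
  have hmeas : MeasurableSet (c⁻¹ • M) := by
    rw [h1]; exact (measurable_const_mul c) hM
  have hsub : c⁻¹ • M ⊆ Set.Ici 0 := by
    rintro x ⟨y, hy, rfl⟩
    exact smul_nonneg (by positivity : (0:ℝ) ≤ c⁻¹) (Set.mem_Ici.mp (hMs hy))
  have := hμinv _ hmeas hsub
  rw [smul_inv_smul₀ hc.ne'] at this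
  exact this.symm

lemma measurePreserving_inv_mul (hμneg : μ (Set.Iio 0) = 0) {c : ℝ} (hc : 0 < c)
    (hμinv : ∀ M : Set ℝ, MeasurableSet M → M ⊆ Set.Ici 0 → μ (c • M) = μ M) :
    MeasurePreserving (fun x : ℝ => c⁻¹ * x) μ μ := by
  refine ⟨measurable_const_mul c⁻¹, ?_⟩
  refine Measure.ext fun s hs => ?_
  rw [Measure.map_apply (measurable_const_mul c⁻¹) hs]
  have hpre : (fun x : ℝ => c⁻¹ * x) ⁻¹' s = c • s := by
    ext x
    simp [Set.mem_smul_set_iff_inv_smul_mem₀ hc.ne', smul_eq_mul]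
  rw [hpre]
  have hs0 : μ (s ∩ Set.Iio 0) = 0 := measure_mono_null Set.inter_subset_right hμneg
  have hneg0 : μ (c • (s ∩ Set.Iio 0)) = 0 := by
    refine measure_mono_null ?_ hμneg
    rintro x ⟨y, hy, rfl⟩
    exact mul_neg_of_pos_of_neg hc hy.2
  have hsplit : s = s ∩ Set.Ici 0 ∪ s ∩ Set.Iio 0 := by
    rw [← Set.inter_union_distrib_left, Set.union_comm, Set.Iio_union_Ici, Set.inter_univ]
  calc μ (c • s) = μ (c • (s ∩ Set.Ici 0) ∪ c • (s ∩ Set.Iio 0)) := by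
        rw [← Set.smul_set_union, ← hsplit]
    _ = μ (c • (s ∩ Set.Ici 0)) := measure_union_null_right hneg0
    _ = μ (s ∩ Set.Ici 0) := hμinv _ (hs.inter measurableSet_Ici) Set.inter_subset_right
    _ = μ s := by conv_rhs => rw [hsplit]
                  rw [measure_union_null_right hs0]

lemma measurePreserving_pair (hμneg : μ (Set.Iio 0) = 0) {c : ℝ} (hc : 0 < c)
    (hμinv : ∀ M : Set ℝ, MeasurableSet M → M ⊆ Set.Ici 0 → μ (c • M) = μ M) :
    MeasurePreserving (fun x : ℝ => c * x) μ μ ∧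
      MeasurePreserving (fun x : ℝ => c⁻¹ * x) μ μ := by
  have h2 := measurePreserving_inv_mul hμneg hc hμinv
  have h1 := measurePreserving_inv_mul hμneg (inv_pos.mpr hc) (smul_inv_invariant hc hμinv)
  simp only [inv_inv] at h1
  exact ⟨h1, h2⟩

lemma measurableEmbedding_mul {b : ℝ} (hb : b ≠ 0) :
    MeasurableEmbedding (fun x : ℝ => b * x) := by
  simpa using (Homeomorph.mulLeft₀ b hb).measurableEmbedding

lemma lintegral_comp_mul {b : ℝ} (hb : b ≠ 0) (hmp : MeasurePreserving (fun x : ℝ => b * x) μ μ)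
    (φ : ℝ → ℝ≥0∞) : ∫⁻ x, φ (b * x) ∂μ = ∫⁻ x, φ x ∂μ :=
  hmp.lintegral_comp_emb (measurableEmbedding_mul hb) φ

lemma integral_comp_mul {b : ℝ} (hb : b ≠ 0) (hmp : MeasurePreserving (fun x : ℝ => b * x) μ μ)
    (g : ℝ → ℂ) : ∫ x, g (b * x) ∂μ = ∫ x, g x ∂μ :=
  hmp.integral_comp (measurableEmbedding_mul hb) g

lemma aeeq_comp_mul {b : ℝ} (hmp : MeasurePreserving (fun x : ℝ => b * x) μ μ)
    {u v : ℝ → ℂ} (h : u =ᵐ[μ] v) : (fun x => u (b * x)) =ᵐ[μ] fun x => v (b * x) :=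
  hmp.quasiMeasurePreserving.ae_eq h



lemma rpow_toReal_two (a : ℝ≥0∞) : a ^ (2 : ℝ≥0∞).toReal = a ^ 2 := by
  rw [ENNReal.toReal_ofNat, ← ENNReal.rpow_natCast a 2]
  norm_num

lemma eLpNorm_two_lt_top_iff {f : ℝ → ℂ} :
    eLpNorm f 2 μ < ⊤ ↔ ∫⁻ x, (‖f x‖₊ : ℝ≥0∞) ^ 2 ∂μ < ⊤ := by
  rw [eLpNorm_lt_top_iff_lintegral_rpow_enorm_lt_top two_ne_zero ENNReal.ofNat_ne_top]
  simp only [rpow_toReal_two, enorm_eq_nnnorm]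

lemma memℒp_two_iff {f : ℝ → ℂ} (hf : AEStronglyMeasurable f μ) :
    MemLp f 2 μ ↔ ∫⁻ x, (‖f x‖₊ : ℝ≥0∞) ^ 2 ∂μ < ⊤ :=
  ⟨fun h => eLpNorm_two_lt_top_iff.mp h.2, fun h => ⟨hf, eLpNorm_two_lt_top_iff.mpr h⟩⟩

lemma lintegral_sq_lt_top (u : Lp ℂ 2 μ) : ∫⁻ x, (‖u x‖₊ : ℝ≥0∞) ^ 2 ∂μ < ⊤ :=
  eLpNorm_two_lt_top_iff.mp (Lp.eLpNorm_lt_top u)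

lemma ofReal_sq_eq (x : ℝ) (v : ℂ) :
    ENNReal.ofReal (x ^ 2 * ‖v‖ ^ 2) = (‖(x : ℂ) * v‖₊ : ℝ≥0∞) ^ 2 := by
  rw [← enorm_eq_nnnorm, ← ofReal_norm, ← ENNReal.ofReal_pow (norm_nonneg _)]
  congr 1
  rw [norm_mul, Complex.norm_real, Real.norm_eq_abs, mul_pow, sq_abs]

lemma ofReal_quartic_eq (x : ℝ) (v : ℂ) :
    ENNReal.ofReal (x ^ 4 * ‖v‖ ^ 2) = (‖((x : ℂ)) ^ 2 * v‖₊ : ℝ≥0∞) ^ 2 := by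
  rw [← enorm_eq_nnnorm, ← ofReal_norm, ← ENNReal.ofReal_pow (norm_nonneg _)]
  congr 1
  rw [norm_mul, norm_pow, Complex.norm_real, Real.norm_eq_abs, mul_pow, ← pow_mul, pow_mul,
    sq_abs, ← pow_mul]

lemma coe_nnnorm_sq (v : ℂ) : (‖v‖₊ : ℝ≥0∞) ^ 2 = ENNReal.ofReal (‖v‖ ^ 2) := by
  rw [← enorm_eq_nnnorm, ← ofReal_norm, ← ENNReal.ofReal_pow (norm_nonneg _)]

lemma const_pull (r : ℝ) (G : ℝ → ℂ) :
    ∫⁻ x, (‖(r : ℂ) * G x‖₊ : ℝ≥0∞) ^ 2 ∂μ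
      = (‖r‖₊ : ℝ≥0∞) ^ 2 * ∫⁻ x, (‖G x‖₊ : ℝ≥0∞) ^ 2 ∂μ := by
  rw [← lintegral_const_mul' _ _ (by exact ENNReal.pow_ne_top ENNReal.coe_ne_top)]
  refine lintegral_congr fun x => ?_
  rw [nnnorm_mul, ENNReal.coe_mul, mul_pow, Complex.nnnorm_real]

lemma lt_top_of_eq_mul {I J C : ℝ≥0∞} (hC : C ≠ 0) (hE : I = C * J) (hI : I < ⊤) : J < ⊤ := by
  by_contra h
  rw [not_lt, top_le_iff] at h
  rw [h, ENNReal.mul_top hC] at hE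
  exact absurd hE hI.ne

lemma adjoint_isClosed {E F : Type*} [NormedAddCommGroup E] [InnerProductSpace ℂ E]
    [NormedAddCommGroup F] [InnerProductSpace ℂ F] [CompleteSpace E] [CompleteSpace F]
    {T : E →ₗ.[ℂ] F} (hT : Dense (T.domain : Set E)) : T.adjoint.IsClosed := by
  have hgr : (T.adjoint.graph : Set (F × E)) =
      ⋂ f : T.domain, {p : F × E | (inner ℂ p.2 (f : E) : ℂ) = inner ℂ p.1 (T f)} := by
    ext p
    simp only [Set.mem_iInter, SetLike.mem_coe, Set.mem_setOf_eq]
    constructor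
    · intro hp f
      rw [LinearPMap.mem_graph_iff] at hp
      obtain ⟨y, hy1, hy2⟩ := hp
      rw [← hy1, ← hy2]
      exact LinearPMap.adjoint_isFormalAdjoint hT y f
    · intro hp
      have hg : p.1 ∈ T.adjoint.domain :=
        LinearPMap.mem_adjoint_domain_of_exists _ ⟨p.2, fun f => hp f⟩
      have happ : T.adjoint ⟨p.1, hg⟩ = p.2 :=
        LinearPMap.adjoint_apply_eq hT _ (fun f => hp f)
      rw [LinearPMap.mem_graph_iff]
      exact ⟨⟨p.1, hg⟩, rfl, happ⟩
  rw [LinearPMap.IsClosed, hgr]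
  refine isClosed_iInter fun f => isClosed_eq ?_ ?_
  · exact Continuous.inner continuous_snd continuous_const
  · exact Continuous.inner continuous_fst continuous_const



/-- the candidate for the adjoint of `f ↦ (c x) f(b x)` -/
noncomputable def wfun (b c : ℝ) (g : ℝ → ℂ) : ℝ → ℂ :=
  fun x => ((c * b⁻¹ * x : ℝ) : ℂ) * g (b⁻¹ * x)

lemma wfun_def (b c : ℝ) (g : ℝ → ℂ) (x : ℝ) :
    wfun b c g x = ((c * b⁻¹ * x : ℝ) : ℂ) * g (b⁻¹ * x) := rfl

lemma K1 {b : ℝ} (hb : b ≠ 0) (hmpb : MeasurePreserving (fun x : ℝ => b * x) μ μ)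
    (g : ℝ → ℂ) :
    ∫⁻ x, (‖(x : ℂ) * g (b⁻¹ * x)‖₊ : ℝ≥0∞) ^ 2 ∂μ
      = ∫⁻ x, (‖((b * x : ℝ) : ℂ) * g x‖₊ : ℝ≥0∞) ^ 2 ∂μ := by
  have h := lintegral_comp_mul hb hmpb (fun y => (‖(y : ℂ) * g (b⁻¹ * y)‖₊ : ℝ≥0∞) ^ 2)
  rw [← h]
  exact lintegral_congr fun x => by rw [inv_mul_cancel_left₀ hb]

lemma E1 {b c : ℝ} (hb : b ≠ 0) (hmpb : MeasurePreserving (fun x : ℝ => b * x) μ μ)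
    (g : ℝ → ℂ) :
    ∫⁻ x, (‖wfun b c g x‖₊ : ℝ≥0∞) ^ 2 ∂μ
      = ((‖c * b⁻¹‖₊ : ℝ≥0∞) ^ 2 * (‖b‖₊ : ℝ≥0∞) ^ 2)
          * ∫⁻ x, (‖(x : ℂ) * g x‖₊ : ℝ≥0∞) ^ 2 ∂μ := by
  calc ∫⁻ x, (‖wfun b c g x‖₊ : ℝ≥0∞) ^ 2 ∂μ
      = ∫⁻ x, (‖((c * b⁻¹ : ℝ) : ℂ) * ((x : ℂ) * g (b⁻¹ * x))‖₊ : ℝ≥0∞) ^ 2 ∂μ := by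
        refine lintegral_congr fun x => ?_
        rw [wfun_def]
        congr 2
        push_cast
        ring
    _ = (‖c * b⁻¹‖₊ : ℝ≥0∞) ^ 2 * ∫⁻ x, (‖(x : ℂ) * g (b⁻¹ * x)‖₊ : ℝ≥0∞) ^ 2 ∂μ :=
        const_pull _ _
    _ = (‖c * b⁻¹‖₊ : ℝ≥0∞) ^ 2 * ∫⁻ x, (‖((b * x : ℝ) : ℂ) * g x‖₊ : ℝ≥0∞) ^ 2 ∂μ := by
        rw [K1 hb hmpb]
    _ = (‖c * b⁻¹‖₊ : ℝ≥0∞) ^ 2 * ∫⁻ x, (‖(b : ℂ) * ((x : ℂ) * g x)‖₊ : ℝ≥0∞) ^ 2 ∂μ := by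
        congr 1
        refine lintegral_congr fun x => ?_
        congr 2
        push_cast
        ring
    _ = ((‖c * b⁻¹‖₊ : ℝ≥0∞) ^ 2 * (‖b‖₊ : ℝ≥0∞) ^ 2)
          * ∫⁻ x, (‖(x : ℂ) * g x‖₊ : ℝ≥0∞) ^ 2 ∂μ := by
        rw [const_pull b (fun x => (x : ℂ) * g x), mul_assoc]

lemma memℒp_comp_mul {b : ℝ} (hb : b ≠ 0)
    (hmp : MeasurePreserving (fun x : ℝ => b * x) μ μ)
    {g : ℝ → ℂ} (hg : MemLp g 2 μ) : MemLp (fun x => g (b * x)) 2 μ := by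
  refine ⟨hg.1.comp_quasiMeasurePreserving hmp.quasiMeasurePreserving, ?_⟩
  have h1 : ∫⁻ x, (‖g (b * x)‖₊ : ℝ≥0∞) ^ 2 ∂μ = ∫⁻ x, (‖g x‖₊ : ℝ≥0∞) ^ 2 ∂μ :=
    lintegral_comp_mul hb hmp (fun x => (‖g x‖₊ : ℝ≥0∞) ^ 2)
  exact (eLpNorm_two_lt_top_iff (f := fun x => g (b * x))).mpr
    (h1 ▸ eLpNorm_two_lt_top_iff.mp hg.2)

lemma aesm_wfun {b c : ℝ} (hmpb' : MeasurePreserving (fun x : ℝ => b⁻¹ * x) μ μ)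
    (g : Lp ℂ 2 μ) : AEStronglyMeasurable (wfun b c ⇑g) μ := by
  have h1 : AEStronglyMeasurable (fun x : ℝ => (g : ℝ → ℂ) (b⁻¹ * x)) μ :=
    (Lp.aestronglyMeasurable g).comp_quasiMeasurePreserving hmpb'.quasiMeasurePreserving
  exact ((Complex.continuous_ofReal.comp
    (continuous_const.mul continuous_id)).aestronglyMeasurable).mul h1

lemma memℒp_wfun {b c : ℝ} (hb : b ≠ 0)
    (hmpb : MeasurePreserving (fun x : ℝ => b * x) μ μ)
    (hmpb' : MeasurePreserving (fun x : ℝ => b⁻¹ * x) μ μ)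
    (g : Lp ℂ 2 μ) (hWg : ∫⁻ x, (‖(x : ℂ) * g x‖₊ : ℝ≥0∞) ^ 2 ∂μ < ⊤) :
    MemLp (wfun b c ⇑g) 2 μ := by
  refine (memℒp_two_iff (aesm_wfun hmpb' g)).mpr ?_
  rw [E1 hb hmpb]
  exact ENNReal.mul_lt_top
    (ENNReal.mul_lt_top (ENNReal.pow_lt_top ENNReal.coe_lt_top)
      (ENNReal.pow_lt_top ENNReal.coe_lt_top)) hWg



section Op

variable {b c : ℝ} {A : Lp ℂ 2 μ →ₗ.[ℂ] Lp ℂ 2 μ}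

lemma inner_formula (hb : 0 < b)
    (hmpb' : MeasurePreserving (fun x : ℝ => b⁻¹ * x) μ μ)
    (hAact : ∀ f : A.domain,
      ((A f : Lp ℂ 2 μ) : ℝ → ℂ) =ᵐ[μ]
        fun x => ((c * x : ℝ) : ℂ) * (f : Lp ℂ 2 μ) (b * x))
    (f : A.domain) (g : Lp ℂ 2 μ) (w : Lp ℂ 2 μ)
    (hw : ⇑w =ᵐ[μ] wfun b c ⇑g) :
    (inner ℂ (A f) g : ℂ) = inner ℂ (f : Lp ℂ 2 μ) w := by
  rw [L2.inner_def, L2.inner_def]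
  calc ∫ x, (inner ℂ ((A f) x) (g x) : ℂ) ∂μ
      = ∫ x, (starRingEnd ℂ) (((c * x : ℝ) : ℂ) * (f : Lp ℂ 2 μ) (b * x)) * g x ∂μ := by
        refine integral_congr_ae ?_
        filter_upwards [hAact f] with x hx
        rw [RCLike.inner_apply', hx]
    _ = ∫ x, (starRingEnd ℂ) (((c * (b⁻¹ * x) : ℝ) : ℂ)
          * (f : Lp ℂ 2 μ) (b * (b⁻¹ * x))) * g (b⁻¹ * x) ∂μ :=
        (integral_comp_mul (inv_ne_zero hb.ne') hmpb'
          (fun x => (starRingEnd ℂ) (((c * x : ℝ) : ℂ)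
            * (f : Lp ℂ 2 μ) (b * x)) * g x)).symm
    _ = ∫ x, (starRingEnd ℂ) ((f : Lp ℂ 2 μ) x) * wfun b c (⇑g) x ∂μ := by
        refine integral_congr_ae (Filter.Eventually.of_forall fun x => ?_)
        simp only [mul_inv_cancel_left₀ hb.ne', wfun_def, map_mul, Complex.conj_ofReal]
        push_cast
        ring
    _ = ∫ x, (starRingEnd ℂ) ((f : Lp ℂ 2 μ) x) * w x ∂μ := by
        refine integral_congr_ae ?_
        filter_upwards [hw] with x hx
        rw [hx]
    _ = ∫ x, (inner ℂ ((f : Lp ℂ 2 μ) x) (w x) : ℂ) ∂μ := by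
        refine integral_congr_ae (Filter.Eventually.of_forall fun x => ?_)
        simp only [RCLike.inner_apply']

lemma forward (hb : 0 < b)
    (hdense : Dense (A.domain : Set (Lp ℂ 2 μ)))
    (hmpb' : MeasurePreserving (fun x : ℝ => b⁻¹ * x) μ μ)
    (hAact : ∀ f : A.domain,
      ((A f : Lp ℂ 2 μ) : ℝ → ℂ) =ᵐ[μ]
        fun x => ((c * x : ℝ) : ℂ) * (f : Lp ℂ 2 μ) (b * x))
    (g : Lp ℂ 2 μ) (w : Lp ℂ 2 μ) (hw : ⇑w =ᵐ[μ] wfun b c ⇑g) :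
    ∃ hg : g ∈ A.adjoint.domain, A.adjoint ⟨g, hg⟩ = w := by
  have hIF : ∀ f : A.domain, (inner ℂ w (f : Lp ℂ 2 μ) : ℂ) = inner ℂ g (A f) := by
    intro f
    have h := inner_formula hb hmpb' hAact f g w hw
    calc (inner ℂ w (f : Lp ℂ 2 μ) : ℂ)
        = (starRingEnd ℂ) (inner ℂ (f : Lp ℂ 2 μ) w) := by rw [inner_conj_symm]
      _ = (starRingEnd ℂ) (inner ℂ (A f) g) := by rw [h]
      _ = inner ℂ g (A f) := by rw [inner_conj_symm]
  exact ⟨LinearPMap.mem_adjoint_domain_of_exists _ ⟨w, hIF⟩,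
    LinearPMap.adjoint_apply_eq hdense _ (fun f => hIF f)⟩


set_option maxHeartbeats 1000000 in
lemma reverse (hb : 0 < b) (hcne : c ≠ 0)
    (hmpb : MeasurePreserving (fun x : ℝ => b * x) μ μ)
    (hmpb' : MeasurePreserving (fun x : ℝ => b⁻¹ * x) μ μ)
    (hdense : Dense (A.domain : Set (Lp ℂ 2 μ)))
    (hAdom : ∀ f : Lp ℂ 2 μ, f ∈ A.domain ↔ ∫⁻ x, (‖(x : ℂ) * f x‖₊ : ℝ≥0∞) ^ 2 ∂μ < ⊤)
    (hAact : ∀ f : A.domain, ((A f : Lp ℂ 2 μ) : ℝ → ℂ) =ᵐ[μ]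
        fun x => ((c * x : ℝ) : ℂ) * (f : Lp ℂ 2 μ) (b * x))
    (g : Lp ℂ 2 μ) (hg : g ∈ A.adjoint.domain) :
    (∫⁻ x, (‖(x : ℂ) * g x‖₊ : ℝ≥0∞) ^ 2 ∂μ < ⊤) ∧
      ⇑(A.adjoint ⟨g, hg⟩) =ᵐ[μ] wfun b c ⇑g := by
  set h : Lp ℂ 2 μ := A.adjoint ⟨g, hg⟩ with hh
  suffices hae : ⇑h =ᵐ[μ] wfun b c ⇑g by
    refine ⟨?_, hae⟩
    have hcongr : (fun x => (‖h x‖₊ : ℝ≥0∞) ^ 2) =ᵐ[μ]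
        fun x => (‖wfun b c (⇑g) x‖₊ : ℝ≥0∞) ^ 2 := by
      filter_upwards [hae] with x hx
      rw [hx]
    have hfin : ∫⁻ x, (‖wfun b c (⇑g) x‖₊ : ℝ≥0∞) ^ 2 ∂μ < ⊤ := by
      rw [← lintegral_congr_ae hcongr]
      exact lintegral_sq_lt_top h
    have h1 : (‖c * b⁻¹‖₊ : ℝ≥0∞) ≠ 0 := by
      simp [nnnorm_eq_zero, hcne, hb.ne']
    have h2 : (‖b‖₊ : ℝ≥0∞) ≠ 0 := by simp [nnnorm_eq_zero, hb.ne']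
    exact lt_top_of_eq_mul
      (mul_ne_zero (pow_ne_zero _ h1) (pow_ne_zero _ h2)) (E1 hb.ne' hmpb ⇑g) hfin
  have hFA : ∀ f : A.domain, (inner ℂ h (f : Lp ℂ 2 μ) : ℂ) = inner ℂ g (A f) := fun f =>
    LinearPMap.adjoint_isFormalAdjoint hdense ⟨g, hg⟩ f
  have hs : ∀ n : ℕ, MeasurableSet {y : ℝ | |y| ≤ (n : ℝ)} := fun n =>
    measurableSet_le (_root_.continuous_abs.measurable) measurable_const
  have key : ∀ n : ℕ, ({y : ℝ | |y| ≤ (n : ℝ)}.indicator ⇑h) =ᵐ[μ]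
      ({y : ℝ | |y| ≤ (n : ℝ)}.indicator (wfun b c ⇑g)) := by
    intro n
    set s : Set ℝ := {y : ℝ | |y| ≤ (n : ℝ)} with hsdef
    have hsm := hs n
    have hindh : MemLp (s.indicator ⇑h) 2 μ := (Lp.memLp h).indicator hsm
    have hgcomp : MemLp (fun x => (g : ℝ → ℂ) (b⁻¹ * x)) 2 μ :=
      memℒp_comp_mul (inv_ne_zero hb.ne') hmpb' (Lp.memLp g)
    have hindw : MemLp (s.indicator (wfun b c ⇑g)) 2 μ := by
      refine MemLp.of_le (hgcomp.const_mul ((|c * b⁻¹| * n : ℝ) : ℂ))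
        ((aesm_wfun hmpb' g).indicator hsm)
        (Filter.Eventually.of_forall fun x => ?_)
      by_cases hx : x ∈ s
      · rw [Set.indicator_of_mem hx, wfun_def]
        rw [norm_mul, norm_mul, Complex.norm_real, Complex.norm_real, Real.norm_eq_abs,
          Real.norm_eq_abs]
        refine mul_le_mul_of_nonneg_right ?_ (norm_nonneg _)
        rw [abs_mul, abs_of_nonneg (by positivity : (0:ℝ) ≤ |c * b⁻¹| * n)]
        exact mul_le_mul_of_nonneg_left hx (abs_nonneg _)
      · rw [Set.indicator_of_notMem hx]
        simp only [norm_zero]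
        positivity
    have hFmem : ∀ u : Lp ℂ 2 μ,
        ((Lp.memLp u).indicator hsm).toLp (s.indicator ⇑u) ∈ A.domain := by
      intro u
      rw [hAdom]
      have hcg : (fun x => (‖(x : ℂ) *
            (((Lp.memLp u).indicator hsm).toLp (s.indicator ⇑u)) x‖₊ : ℝ≥0∞) ^ 2)
          =ᵐ[μ] fun x => (‖(x : ℂ) * s.indicator (⇑u) x‖₊ : ℝ≥0∞) ^ 2 := by
        filter_upwards [MemLp.coeFn_toLp (f := s.indicator ⇑u) ((Lp.memLp u).indicator hsm)] with x hx
        rw [hx]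
      rw [lintegral_congr_ae hcg]
      have hbd : ∀ x : ℝ, (‖(x : ℂ) * s.indicator (⇑u) x‖₊ : ℝ≥0∞) ^ 2
          ≤ ENNReal.ofReal ((n : ℝ) ^ 2) * (‖u x‖₊ : ℝ≥0∞) ^ 2 := by
        intro x
        by_cases hx : x ∈ s
        · rw [Set.indicator_of_mem hx, ← ofReal_sq_eq, coe_nnnorm_sq,
            ← ENNReal.ofReal_mul (by positivity)]
          refine ENNReal.ofReal_le_ofReal ?_
          have hxx : x ^ 2 ≤ (n : ℝ) ^ 2 := by
            rw [← sq_abs]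
            exact pow_le_pow_left₀ (abs_nonneg x) hx 2
          exact mul_le_mul_of_nonneg_right hxx (by positivity)
        · rw [Set.indicator_of_notMem hx, mul_zero]
          simp
      calc ∫⁻ x, (‖(x : ℂ) * s.indicator (⇑u) x‖₊ : ℝ≥0∞) ^ 2 ∂μ
          ≤ ∫⁻ x, ENNReal.ofReal ((n : ℝ) ^ 2) * (‖u x‖₊ : ℝ≥0∞) ^ 2 ∂μ :=
            lintegral_mono hbd
        _ = ENNReal.ofReal ((n : ℝ) ^ 2) * ∫⁻ x, (‖u x‖₊ : ℝ≥0∞) ^ 2 ∂μ :=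
            lintegral_const_mul' _ _ ENNReal.ofReal_ne_top
        _ < ⊤ := ENNReal.mul_lt_top ENNReal.ofReal_lt_top (lintegral_sq_lt_top u)
    have hmain : ∀ u : Lp ℂ 2 μ,
        (inner ℂ (hindh.toLp (s.indicator ⇑h)) u : ℂ)
          = inner ℂ (hindw.toLp (s.indicator (wfun b c ⇑g))) u := by
      intro u
      have hid := hFA ⟨((Lp.memLp u).indicator hsm).toLp (s.indicator ⇑u), hFmem u⟩
      have lhs1 : (inner ℂ (hindh.toLp (s.indicator ⇑h)) u : ℂ)
          = inner ℂ h (((Lp.memLp u).indicator hsm).toLp (s.indicator ⇑u)) := by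
        rw [L2.inner_def, L2.inner_def]
        refine integral_congr_ae ?_
        filter_upwards [hindh.coeFn_toLp,
          MemLp.coeFn_toLp (f := s.indicator ⇑u) ((Lp.memLp u).indicator hsm)] with x hx1 hx2
        simp only [RCLike.inner_apply']
        rw [hx1, hx2]
        by_cases hxs : x ∈ s
        · rw [Set.indicator_of_mem hxs, Set.indicator_of_mem hxs]
        · rw [Set.indicator_of_notMem hxs, Set.indicator_of_notMem hxs]
          simp
      have hcomp := aeeq_comp_mul hmpb (MemLp.coeFn_toLp (f := s.indicator ⇑u) ((Lp.memLp u).indicator hsm))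
      have rhs1 : (inner ℂ g (A ⟨((Lp.memLp u).indicator hsm).toLp (s.indicator ⇑u),
            hFmem u⟩) : ℂ)
          = ∫ x, (starRingEnd ℂ) (wfun b c (⇑g) x) * s.indicator (⇑u) x ∂μ := by
        rw [L2.inner_def]
        calc ∫ x, (inner ℂ (g x)
              ((A ⟨((Lp.memLp u).indicator hsm).toLp (s.indicator ⇑u), hFmem u⟩) x) : ℂ) ∂μ
            = ∫ x, (starRingEnd ℂ) (g x)
                * (((c * x : ℝ) : ℂ) * s.indicator (⇑u) (b * x)) ∂μ := by
              refine integral_congr_ae ?_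
              filter_upwards [hAact ⟨((Lp.memLp u).indicator hsm).toLp (s.indicator ⇑u),
                hFmem u⟩, hcomp] with x hx1 hx2
              simp only [RCLike.inner_apply', hx1, hx2]
          _ = ∫ x, (starRingEnd ℂ) (g (b⁻¹ * x))
                * (((c * (b⁻¹ * x) : ℝ) : ℂ) * s.indicator (⇑u) (b * (b⁻¹ * x))) ∂μ :=
              (integral_comp_mul (inv_ne_zero hb.ne') hmpb'
                (fun x => (starRingEnd ℂ) (g x)
                  * (((c * x : ℝ) : ℂ) * s.indicator (⇑u) (b * x)))).symm
          _ = ∫ x, (starRingEnd ℂ) (wfun b c (⇑g) x) * s.indicator (⇑u) x ∂μ := by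
              refine integral_congr_ae (Filter.Eventually.of_forall fun x => ?_)
              simp only [mul_inv_cancel_left₀ hb.ne', wfun_def, map_mul, Complex.conj_ofReal]
              push_cast
              ring
      have rhs2 : ∫ x, (starRingEnd ℂ) (wfun b c (⇑g) x) * s.indicator (⇑u) x ∂μ
          = (inner ℂ (hindw.toLp (s.indicator (wfun b c ⇑g))) u : ℂ) := by
        rw [L2.inner_def]
        refine integral_congr_ae ?_
        filter_upwards [hindw.coeFn_toLp] with x hx
        simp only [RCLike.inner_apply']
        rw [hx]
        by_cases hxs : x ∈ s
        · rw [Set.indicator_of_mem hxs, Set.indicator_of_mem hxs]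
        · rw [Set.indicator_of_notMem hxs, Set.indicator_of_notMem hxs]
          simp
      rw [lhs1, hid, rhs1, rhs2]
    exact (MemLp.toLp_eq_toLp_iff hindh hindw).mp (ext_inner_right ℂ hmain)
  have hall := ae_all_iff.mpr key
  filter_upwards [hall] with x hx
  have hmem : x ∈ {y : ℝ | |y| ≤ ((⌈|x|⌉₊ : ℕ) : ℝ)} := by
    simp only [Set.mem_setOf_eq]
    exact Nat.le_ceil _
  have h1 := hx ⌈|x|⌉₊
  rw [Set.indicator_of_mem hmem, Set.indicator_of_mem hmem] at h1
  exact h1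

lemma master (hb : 0 < b) (hcne : c ≠ 0)
    (hmpb : MeasurePreserving (fun x : ℝ => b * x) μ μ)
    (hmpb' : MeasurePreserving (fun x : ℝ => b⁻¹ * x) μ μ)
    (hdense : Dense (A.domain : Set (Lp ℂ 2 μ)))
    (hAdom : ∀ f : Lp ℂ 2 μ, f ∈ A.domain ↔ ∫⁻ x, (‖(x : ℂ) * f x‖₊ : ℝ≥0∞) ^ 2 ∂μ < ⊤)
    (hAact : ∀ f : A.domain, ((A f : Lp ℂ 2 μ) : ℝ → ℂ) =ᵐ[μ]
        fun x => ((c * x : ℝ) : ℂ) * (f : Lp ℂ 2 μ) (b * x)) :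
    (∀ g : Lp ℂ 2 μ, g ∈ A.adjoint.domain ↔
        ∫⁻ x, (‖(x : ℂ) * g x‖₊ : ℝ≥0∞) ^ 2 ∂μ < ⊤) ∧
      (∀ (g : Lp ℂ 2 μ) (hg : g ∈ A.adjoint.domain),
        ⇑(A.adjoint ⟨g, hg⟩) =ᵐ[μ] wfun b c ⇑g) := by
  constructor
  · intro g
    constructor
    · intro hg
      exact (reverse hb hcne hmpb hmpb' hdense hAdom hAact g hg).1
    · intro hWg
      obtain ⟨hg, -⟩ := forward hb hdense hmpb' hAact g
        ((memℒp_wfun hb.ne' hmpb hmpb' g hWg).toLp _)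
        (MemLp.coeFn_toLp _)
      exact hg
  · intro g hg
    exact (reverse hb hcne hmpb hmpb' hdense hAdom hAact g hg).2

end Op

lemma quartic_comp {r : ℝ} (hr : r ≠ 0)
    (hmpr' : MeasurePreserving (fun x : ℝ => r⁻¹ * x) μ μ) (f : ℝ → ℂ) :
    ∫⁻ x, (‖(x : ℂ) ^ 2 * f (r * x)‖₊ : ℝ≥0∞) ^ 2 ∂μ
      = (‖(r⁻¹) ^ 2‖₊ : ℝ≥0∞) ^ 2 * ∫⁻ x, (‖(x : ℂ) ^ 2 * f x‖₊ : ℝ≥0∞) ^ 2 ∂μ := by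
  have h := lintegral_comp_mul (inv_ne_zero hr) hmpr'
    (fun y => (‖(y : ℂ) ^ 2 * f (r * y)‖₊ : ℝ≥0∞) ^ 2)
  rw [← h]
  calc ∫⁻ x, (‖((r⁻¹ * x : ℝ) : ℂ) ^ 2 * f (r * (r⁻¹ * x))‖₊ : ℝ≥0∞) ^ 2 ∂μ
      = ∫⁻ x, (‖(((r⁻¹) ^ 2 : ℝ) : ℂ) * ((x : ℂ) ^ 2 * f x)‖₊ : ℝ≥0∞) ^ 2 ∂μ := by
        refine lintegral_congr fun x => ?_
        rw [mul_inv_cancel_left₀ hr]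
        congr 2
        push_cast
        ring
    _ = (‖(r⁻¹) ^ 2‖₊ : ℝ≥0∞) ^ 2 * ∫⁻ x, (‖(x : ℂ) ^ 2 * f x‖₊ : ℝ≥0∞) ^ 2 ∂μ :=
        const_pull _ _

lemma E2 {b c : ℝ} (hb : b ≠ 0)
    (hmpb : MeasurePreserving (fun x : ℝ => b * x) μ μ) (f : ℝ → ℂ) :
    ∫⁻ x, (‖(x : ℂ) * wfun b c f x‖₊ : ℝ≥0∞) ^ 2 ∂μ
      = ((‖c * b⁻¹‖₊ : ℝ≥0∞) ^ 2 * (‖b ^ 2‖₊ : ℝ≥0∞) ^ 2)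
          * ∫⁻ x, (‖(x : ℂ) ^ 2 * f x‖₊ : ℝ≥0∞) ^ 2 ∂μ := by
  have hmpb'' : MeasurePreserving (fun x : ℝ => (b⁻¹)⁻¹ * x) μ μ := by
    simp only [inv_inv]; exact hmpb
  calc ∫⁻ x, (‖(x : ℂ) * wfun b c f x‖₊ : ℝ≥0∞) ^ 2 ∂μ
      = ∫⁻ x, (‖((c * b⁻¹ : ℝ) : ℂ) * ((x : ℂ) ^ 2 * f (b⁻¹ * x))‖₊ : ℝ≥0∞) ^ 2 ∂μ := by
        refine lintegral_congr fun x => ?_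
        rw [wfun_def]
        congr 2
        push_cast
        ring
    _ = (‖c * b⁻¹‖₊ : ℝ≥0∞) ^ 2 * ∫⁻ x, (‖(x : ℂ) ^ 2 * f (b⁻¹ * x)‖₊ : ℝ≥0∞) ^ 2 ∂μ :=
        const_pull _ _
    _ = (‖c * b⁻¹‖₊ : ℝ≥0∞) ^ 2 * ((‖((b⁻¹)⁻¹) ^ 2‖₊ : ℝ≥0∞) ^ 2
          * ∫⁻ x, (‖(x : ℂ) ^ 2 * f x‖₊ : ℝ≥0∞) ^ 2 ∂μ) := by
        rw [quartic_comp (inv_ne_zero hb) hmpb'' f]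
    _ = ((‖c * b⁻¹‖₊ : ℝ≥0∞) ^ 2 * (‖b ^ 2‖₊ : ℝ≥0∞) ^ 2)
          * ∫⁻ x, (‖(x : ℂ) ^ 2 * f x‖₊ : ℝ≥0∞) ^ 2 ∂μ := by
        rw [inv_inv, mul_assoc]

lemma E3 {b c : ℝ} (hb : b ≠ 0)
    (hmpb' : MeasurePreserving (fun x : ℝ => b⁻¹ * x) μ μ) (f : ℝ → ℂ) :
    ∫⁻ x, (‖(x : ℂ) * (((c * x : ℝ) : ℂ) * f (b * x))‖₊ : ℝ≥0∞) ^ 2 ∂μ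
      = ((‖c‖₊ : ℝ≥0∞) ^ 2 * (‖(b⁻¹) ^ 2‖₊ : ℝ≥0∞) ^ 2)
          * ∫⁻ x, (‖(x : ℂ) ^ 2 * f x‖₊ : ℝ≥0∞) ^ 2 ∂μ := by
  calc ∫⁻ x, (‖(x : ℂ) * (((c * x : ℝ) : ℂ) * f (b * x))‖₊ : ℝ≥0∞) ^ 2 ∂μ
      = ∫⁻ x, (‖(c : ℂ) * ((x : ℂ) ^ 2 * f (b * x))‖₊ : ℝ≥0∞) ^ 2 ∂μ := by
        refine lintegral_congr fun x => ?_
        congr 2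
        push_cast
        ring
    _ = (‖c‖₊ : ℝ≥0∞) ^ 2 * ∫⁻ x, (‖(x : ℂ) ^ 2 * f (b * x)‖₊ : ℝ≥0∞) ^ 2 ∂μ :=
        const_pull _ _
    _ = ((‖c‖₊ : ℝ≥0∞) ^ 2 * (‖(b⁻¹) ^ 2‖₊ : ℝ≥0∞) ^ 2)
          * ∫⁻ x, (‖(x : ℂ) ^ 2 * f x‖₊ : ℝ≥0∞) ^ 2 ∂μ := by
        rw [quartic_comp hb hmpb' f, mul_assoc]

lemma W_lt_top_of_Q (f : Lp ℂ 2 μ)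
    (hQ : ∫⁻ x, (‖(x : ℂ) ^ 2 * f x‖₊ : ℝ≥0∞) ^ 2 ∂μ < ⊤) :
    ∫⁻ x, (‖(x : ℂ) * f x‖₊ : ℝ≥0∞) ^ 2 ∂μ < ⊤ := by
  have hbd : ∀ x : ℝ, (‖(x : ℂ) * f x‖₊ : ℝ≥0∞) ^ 2
      ≤ (‖f x‖₊ : ℝ≥0∞) ^ 2 + (‖(x : ℂ) ^ 2 * f x‖₊ : ℝ≥0∞) ^ 2 := by
    intro x
    rw [← ofReal_sq_eq, ← ofReal_quartic_eq, coe_nnnorm_sq,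
      ← ENNReal.ofReal_add (by positivity) (by positivity)]
    refine ENNReal.ofReal_le_ofReal ?_
    nlinarith [sq_nonneg (x ^ 2 - 1), sq_nonneg x, sq_nonneg (‖f x‖),
      mul_nonneg (mul_nonneg (sq_nonneg (‖f x‖)) (sq_nonneg (x ^ 2 - 1)))
        (sq_nonneg (‖f x‖)),
      mul_nonneg (sq_nonneg (‖f x‖)) (sq_nonneg (x ^ 2 - 1))]
  have hm1 : AEMeasurable (fun x => (‖f x‖₊ : ℝ≥0∞) ^ 2) μ :=
    ((Lp.aestronglyMeasurable f).enorm).pow_const 2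
  calc ∫⁻ x, (‖(x : ℂ) * f x‖₊ : ℝ≥0∞) ^ 2 ∂μ
      ≤ ∫⁻ x, ((‖f x‖₊ : ℝ≥0∞) ^ 2 + (‖(x : ℂ) ^ 2 * f x‖₊ : ℝ≥0∞) ^ 2) ∂μ :=
        lintegral_mono hbd
    _ = (∫⁻ x, (‖f x‖₊ : ℝ≥0∞) ^ 2 ∂μ) + ∫⁻ x, (‖(x : ℂ) ^ 2 * f x‖₊ : ℝ≥0∞) ^ 2 ∂μ :=
        lintegral_add_left' hm1 _
    _ < ⊤ := ENNReal.add_lt_top.mpr ⟨lintegral_sq_lt_top f, hQ⟩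

end QNM

/-- The model operator `(ζ f)(x) = q x f(qx)` is closed and `q`-normal:
`ζ ζ* = q² ζ* ζ`, with `D(ζζ*) = D(ζ*ζ) = {f : ∫ x⁴|f|² dμ < ∞}` and
`ζ(ζ* f) = q² ζ*(ζ f)` on this common domain. -/
theorem qNormal_model_closed_and_qnormal
    (q : ℝ) (hq0 : 0 < q) (hq1 : q < 1)
    (μ : Measure ℝ) (hμneg : μ (Set.Iio 0) = 0)
    (hμinv : ∀ M : Set ℝ, MeasurableSet M → M ⊆ Set.Ici 0 → μ (q • M) = μ M)
    (ζ : Lp ℂ 2 μ →ₗ.[ℂ] Lp ℂ 2 μ)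
    (hdense : Dense (ζ.domain : Set (Lp ℂ 2 μ)))
    (hdom : ∀ f : Lp ℂ 2 μ,
      f ∈ ζ.domain ↔ ∫⁻ x, ENNReal.ofReal (x ^ 2 * ‖f x‖ ^ 2) ∂μ < ⊤)
    (hact : ∀ f : ζ.domain,
      (ζ f : ℝ → ℂ) =ᵐ[μ] fun x => ((q * x : ℝ) : ℂ) * (f : Lp ℂ 2 μ) (q * x)) :
    ζ.IsClosed ∧
    (∀ f : Lp ℂ 2 μ,
      ((∃ hf : f ∈ ζ.adjoint.domain, ζ.adjoint ⟨f, hf⟩ ∈ ζ.domain) ↔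
        ∫⁻ x, ENNReal.ofReal (x ^ 4 * ‖f x‖ ^ 2) ∂μ < ⊤) ∧
      ((∃ hf : f ∈ ζ.domain, ζ ⟨f, hf⟩ ∈ ζ.adjoint.domain) ↔
        ∫⁻ x, ENNReal.ofReal (x ^ 4 * ‖f x‖ ^ 2) ∂μ < ⊤)) ∧
    (∀ (f : Lp ℂ 2 μ) (hf1 : f ∈ ζ.adjoint.domain)
        (hf2 : ζ.adjoint ⟨f, hf1⟩ ∈ ζ.domain)
        (hg1 : f ∈ ζ.domain) (hg2 : ζ ⟨f, hg1⟩ ∈ ζ.adjoint.domain),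
      ζ ⟨ζ.adjoint ⟨f, hf1⟩, hf2⟩
        = ((q : ℂ) ^ 2) • ζ.adjoint ⟨ζ ⟨f, hg1⟩, hg2⟩) := by
  have hq : q ≠ 0 := hq0.ne'
  obtain ⟨hmpT, hmpS⟩ := QNM.measurePreserving_pair hμneg hq0 hμinv
  have hdomE : ∀ f : Lp ℂ 2 μ,
      f ∈ ζ.domain ↔ ∫⁻ x, (‖(x : ℂ) * f x‖₊ : ℝ≥0∞) ^ 2 ∂μ < ⊤ := by
    intro f
    rw [hdom f, lintegral_congr fun x => QNM.ofReal_sq_eq x (f x)]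
  obtain ⟨Z1, Z2⟩ := QNM.master (A := ζ) hq0 hq hmpT hmpS hdense hdomE hact
  have hdense' : Dense (ζ.adjoint.domain : Set (Lp ℂ 2 μ)) := by
    have hset : (ζ.adjoint.domain : Set (Lp ℂ 2 μ)) = (ζ.domain : Set (Lp ℂ 2 μ)) := by
      ext f
      simp only [SetLike.mem_coe]
      rw [Z1, hdomE]
    rw [hset]
    exact hdense
  have hmpT' : MeasurePreserving (fun x : ℝ => (q⁻¹)⁻¹ * x) μ μ := by
    simp only [inv_inv]; exact hmpT
  have hactA : ∀ g : ζ.adjoint.domain,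
      ((ζ.adjoint g : Lp ℂ 2 μ) : ℝ → ℂ) =ᵐ[μ]
        fun x => ((q * q⁻¹ * x : ℝ) : ℂ) * (g : Lp ℂ 2 μ) (q⁻¹ * x) := fun g =>
    Z2 g g.2
  obtain ⟨ZZ1, -⟩ := QNM.master (A := ζ.adjoint) (inv_pos.mpr hq0)
    (mul_ne_zero hq (inv_ne_zero hq)) hmpS hmpT' hdense' Z1 hactA
  have hle : ζ ≤ ζ.adjoint.adjoint :=
    LinearPMap.IsFormalAdjoint.le_adjoint hdense'
      (LinearPMap.adjoint_isFormalAdjoint hdense)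
  have hdomeq : ζ.domain = ζ.adjoint.adjoint.domain := by
    ext f
    rw [hdomE, ZZ1]
  have hζeq : ζ = ζ.adjoint.adjoint := LinearPMap.eq_of_le_of_domain_eq hle hdomeq
  refine ⟨?_, ?_, ?_⟩
  · rw [hζeq]
    exact QNM.adjoint_isClosed hdense'
  · intro f
    have hquartf : ∫⁻ x, ENNReal.ofReal (x ^ 4 * ‖f x‖ ^ 2) ∂μ
        = ∫⁻ x, (‖(x : ℂ) ^ 2 * f x‖₊ : ℝ≥0∞) ^ 2 ∂μ :=
      lintegral_congr fun x => QNM.ofReal_quartic_eq x (f x)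
    have hC2ne : ((‖q * q⁻¹‖₊ : ℝ≥0∞) ^ 2 * (‖q ^ 2‖₊ : ℝ≥0∞) ^ 2) ≠ 0 := by
      refine mul_ne_zero (pow_ne_zero _ ?_) (pow_ne_zero _ ?_) <;>
        simp [nnnorm_eq_zero, hq]
    have hC2top : ((‖q * q⁻¹‖₊ : ℝ≥0∞) ^ 2 * (‖q ^ 2‖₊ : ℝ≥0∞) ^ 2) < ⊤ :=
      ENNReal.mul_lt_top (ENNReal.pow_lt_top ENNReal.coe_lt_top)
        (ENNReal.pow_lt_top ENNReal.coe_lt_top)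
    have hC3ne : ((‖q‖₊ : ℝ≥0∞) ^ 2 * (‖(q⁻¹) ^ 2‖₊ : ℝ≥0∞) ^ 2) ≠ 0 := by
      refine mul_ne_zero (pow_ne_zero _ ?_) (pow_ne_zero _ ?_) <;>
        simp [nnnorm_eq_zero, hq]
    have hC3top : ((‖q‖₊ : ℝ≥0∞) ^ 2 * (‖(q⁻¹) ^ 2‖₊ : ℝ≥0∞) ^ 2) < ⊤ :=
      ENNReal.mul_lt_top (ENNReal.pow_lt_top ENNReal.coe_lt_top)
        (ENNReal.pow_lt_top ENNReal.coe_lt_top)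
    constructor
    · rw [hquartf]
      constructor
      · rintro ⟨hf1, hf2⟩
        rw [hdomE] at hf2
        have hco : (fun x => (‖(x : ℂ) * (ζ.adjoint ⟨f, hf1⟩) x‖₊ : ℝ≥0∞) ^ 2) =ᵐ[μ]
            fun x => (‖(x : ℂ) * QNM.wfun q q (⇑f) x‖₊ : ℝ≥0∞) ^ 2 := by
          filter_upwards [Z2 f hf1] with x hx
          rw [hx]
        rw [lintegral_congr_ae hco] at hf2
        exact QNM.lt_top_of_eq_mul hC2ne (QNM.E2 hq hmpT ⇑f) hf2
      · intro hQ
        have hf1 : f ∈ ζ.adjoint.domain := (Z1 f).mpr (QNM.W_lt_top_of_Q f hQ)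
        refine ⟨hf1, ?_⟩
        rw [hdomE]
        have hco : (fun x => (‖(x : ℂ) * (ζ.adjoint ⟨f, hf1⟩) x‖₊ : ℝ≥0∞) ^ 2) =ᵐ[μ]
            fun x => (‖(x : ℂ) * QNM.wfun q q (⇑f) x‖₊ : ℝ≥0∞) ^ 2 := by
          filter_upwards [Z2 f hf1] with x hx
          rw [hx]
        rw [lintegral_congr_ae hco, QNM.E2 hq hmpT ⇑f]
        exact ENNReal.mul_lt_top hC2top hQ
    · rw [hquartf]
      constructor
      · rintro ⟨hg1, hg2⟩
        rw [Z1] at hg2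
        have hco : (fun x => (‖(x : ℂ) * (ζ ⟨f, hg1⟩) x‖₊ : ℝ≥0∞) ^ 2) =ᵐ[μ]
            fun x => (‖(x : ℂ) * (((q * x : ℝ) : ℂ) * f (q * x))‖₊ : ℝ≥0∞) ^ 2 := by
          filter_upwards [hact ⟨f, hg1⟩] with x hx
          rw [hx]
        rw [lintegral_congr_ae hco] at hg2
        exact QNM.lt_top_of_eq_mul hC3ne (QNM.E3 hq hmpS ⇑f) hg2
      · intro hQ
        have hg1 : f ∈ ζ.domain := (hdomE f).mpr (QNM.W_lt_top_of_Q f hQ)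
        refine ⟨hg1, ?_⟩
        rw [Z1]
        have hco : (fun x => (‖(x : ℂ) * (ζ ⟨f, hg1⟩) x‖₊ : ℝ≥0∞) ^ 2) =ᵐ[μ]
            fun x => (‖(x : ℂ) * (((q * x : ℝ) : ℂ) * f (q * x))‖₊ : ℝ≥0∞) ^ 2 := by
          filter_upwards [hact ⟨f, hg1⟩] with x hx
          rw [hx]
        rw [lintegral_congr_ae hco, QNM.E3 hq hmpS ⇑f]
        exact ENNReal.mul_lt_top hC3top hQ
  · intro f hf1 hf2 hg1 hg2
    refine Lp.ext ?_
    have hqq : q * q⁻¹ = 1 := mul_inv_cancel₀ hq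
    have lhs : ⇑(ζ ⟨ζ.adjoint ⟨f, hf1⟩, hf2⟩) =ᵐ[μ]
        fun x => ((q : ℂ) ^ 2 * ((x : ℂ) ^ 2 * f x)) := by
      have h2 := QNM.aeeq_comp_mul hmpT (Z2 f hf1)
      filter_upwards [hact ⟨ζ.adjoint ⟨f, hf1⟩, hf2⟩, h2] with x hx1 hx2
      rw [hx1]
      have hx2' : (ζ.adjoint ⟨f, hf1⟩ : ℝ → ℂ) (q * x)
          = QNM.wfun q q (⇑f) (q * x) := hx2
      rw [hx2', QNM.wfun_def]
      rw [inv_mul_cancel_left₀ hq, hqq, one_mul]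
      push_cast
      ring
    have rhs : ⇑(((q : ℂ) ^ 2) • ζ.adjoint ⟨ζ ⟨f, hg1⟩, hg2⟩) =ᵐ[μ]
        fun x => ((q : ℂ) ^ 2 * ((x : ℂ) ^ 2 * f x)) := by
      have h2 := QNM.aeeq_comp_mul hmpS (hact ⟨f, hg1⟩)
      filter_upwards [Lp.coeFn_smul ((q : ℂ) ^ 2) (ζ.adjoint ⟨ζ ⟨f, hg1⟩, hg2⟩),
        Z2 (ζ ⟨f, hg1⟩) hg2, h2] with x hx0 hx1 hx2
      rw [hx0]
      simp only [Pi.smul_apply, smul_eq_mul]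
      rw [hx1, QNM.wfun_def]
      have hx2' : (ζ ⟨f, hg1⟩ : ℝ → ℂ) (q⁻¹ * x)
          = ((q * (q⁻¹ * x) : ℝ) : ℂ) * f (q * (q⁻¹ * x)) := hx2
      rw [hx2', mul_inv_cancel_left₀ hq, hqq, one_mul]
      push_cast
      ring
    exact lhs.trans rhs.symm
end

section
/- For k ∈ ℤ and f ∈ C₀([0,∞), ℂ) with f(0) = 0 whenever k ≠ 0, define g_{f,k} : ℂ → ℂ by g_{f,k}(w) = f(|w|)·(w/|w|)^{k} for w ≠ 0, g_{f,0}(0) = f(0), and g_{f,k}(0) = 0 for k ≠ 0 (so that g_{f,k} is continuous on ℂ and vanishes at infinity). Then the linear span of the functions g_{f,k}, over all k ∈ ℤ and all admissible f, is a star-subalgebra of C₀(ℂ, ℂ) that separates the points of ℂ and is dense in C₀(ℂ, ℂ) in the supremum norm. -/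
open Filter
open scoped ZeroAtInfty

/-- The set of functions `g_{f,k}(w) = f(|w|) (w/|w|)^k` in `C₀(ℂ)`, where `k ∈ ℤ` and
`f ∈ C₀([0,∞))` with `f(0) = 0` whenever `k ≠ 0`. -/
def polarGenerators : Set C₀(ℂ, ℂ) :=
  {g | ∃ (k : ℤ) (f : ℝ → ℂ), Continuous f ∧ Tendsto f atTop (nhds 0) ∧
    (k ≠ 0 → f 0 = 0) ∧
    ∀ w : ℂ, g w = if w = 0 then (if k = 0 then f 0 else 0)
      else f ‖w‖ * (w / (‖w‖ : ℂ)) ^ k}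

lemma polarGenerators_mul {g g' : C₀(ℂ, ℂ)} (hg : g ∈ polarGenerators)
    (hg' : g' ∈ polarGenerators) : g * g' ∈ polarGenerators := by
  obtain ⟨k, f, hfc, hf0, hfz, hfw⟩ := hg
  obtain ⟨k', f', hfc', hf0', hfz', hfw'⟩ := hg'
  refine ⟨k + k', f * f', hfc.mul hfc', by simpa [Pi.mul_def] using hf0.mul hf0', ?_, ?_⟩
  · intro hkk
    rcases Classical.em (k = 0) with rfl | hk
    · simp only [zero_add] at hkk
      simp [Pi.mul_apply, hfz' hkk]
    · simp [Pi.mul_apply, hfz hk]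
  · intro w
    rcases Classical.em (w = 0) with rfl | hw
    · simp only [ZeroAtInftyContinuousMap.coe_mul, Pi.mul_apply, hfw 0, hfw' 0, if_pos rfl]
      rcases Classical.em (k = 0) with rfl | hk
      · rcases Classical.em (k' = 0) with rfl | hk'
        · simp
        · simp [hk']
      · rcases Classical.em (k' = 0) with rfl | hk'
        · simp [hk]
        · rcases Classical.em (k + k' = 0) with hkk | hkk
          · simp [hk, hk', hkk, hfz hk]
          · simp [hk, hk', hkk]
    · have habs : (‖w‖ : ℂ) ≠ 0 := by
        simpa using (norm_ne_zero_iff.mpr hw)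
      have hu : w / (‖w‖ : ℂ) ≠ 0 := div_ne_zero hw habs
      simp only [ZeroAtInftyContinuousMap.coe_mul, Pi.mul_apply, hfw w, hfw' w, if_neg hw]
      rw [zpow_add₀ hu]
      ring

lemma polarGenerators_star {g : C₀(ℂ, ℂ)} (hg : g ∈ polarGenerators) :
    star g ∈ polarGenerators := by
  obtain ⟨k, f, hfc, hf0, hfz, hfw⟩ := hg
  refine ⟨-k, fun r => starRingEnd ℂ (f r), (Complex.continuous_conj).comp hfc, ?_, ?_, ?_⟩
  · have := (Complex.continuous_conj).tendsto (0 : ℂ)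
    simpa [Function.comp_def] using this.comp hf0
  · intro hk
    have : k ≠ 0 := fun h => hk (by simp [h])
    simp [hfz this]
  · intro w
    rcases Classical.em (w = 0) with rfl | hw
    · simp only [ZeroAtInftyContinuousMap.coe_star, Pi.star_apply, hfw 0, if_pos rfl]
      rcases Classical.em (k = 0) with rfl | hk
      · simp
      · have : ¬(-k = 0) := fun h => hk (by omega)
        simp [hk, this]
    · have habs : (‖w‖ : ℂ) ≠ 0 := by
        simpa using (norm_ne_zero_iff.mpr hw)
      have hu : w / (‖w‖ : ℂ) ≠ 0 := div_ne_zero hw habs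
      have hnorm : ‖w / (‖w‖ : ℂ)‖ = 1 := by
        simp [norm_div, abs_of_nonneg (norm_nonneg w),
          div_self (norm_ne_zero_iff.mpr hw)]
      have hconj : starRingEnd ℂ (w / (‖w‖ : ℂ)) = (w / (‖w‖ : ℂ))⁻¹ :=
        (Complex.inv_eq_conj hnorm).symm
      simp only [ZeroAtInftyContinuousMap.coe_star, Pi.star_apply, hfw w, if_neg hw]
      rw [Complex.star_def, map_mul, map_zpow₀, hconj, inv_zpow, ← zpow_neg]

lemma span_mul_mem {a b : C₀(ℂ, ℂ)} (ha : a ∈ Submodule.span ℂ polarGenerators)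
    (hb : b ∈ Submodule.span ℂ polarGenerators) :
    a * b ∈ Submodule.span ℂ polarGenerators := by
  induction ha using Submodule.span_induction generalizing b with
  | mem x hx =>
    induction hb using Submodule.span_induction with
    | mem y hy => exact Submodule.subset_span (polarGenerators_mul hx hy)
    | zero => simpa using Submodule.zero_mem _
    | add y z _ _ hy hz => rw [mul_add]; exact Submodule.add_mem _ hy hz
    | smul c y _ hy => rw [mul_smul_comm]; exact Submodule.smul_mem _ c hy
  | zero => simpa using Submodule.zero_mem _
  | add x y _ _ hx hy => rw [add_mul]; exact Submodule.add_mem _ (hx hb) (hy hb)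
  | smul c x _ hx => rw [smul_mul_assoc]; exact Submodule.smul_mem _ c (hx hb)

lemma span_star_mem {a : C₀(ℂ, ℂ)} (ha : a ∈ Submodule.span ℂ polarGenerators) :
    star a ∈ Submodule.span ℂ polarGenerators := by
  induction ha using Submodule.span_induction with
  | mem x hx => exact Submodule.subset_span (polarGenerators_star hx)
  | zero => simpa using Submodule.zero_mem _
  | add x y _ _ hx hy => rw [star_add]; exact Submodule.add_mem _ hx hy
  | smul c x _ hx =>
    rw [star_smul]
    exact Submodule.smul_mem _ _ hx

noncomputable def gexp : C₀(ℂ, ℂ) where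
  toFun := fun w => (Real.exp (-(‖w‖)) : ℂ)
  continuous_toFun := by
    exact Complex.continuous_ofReal.comp (Real.continuous_exp.comp
      (continuous_neg.comp continuous_norm))
  zero_at_infty' := by
    have h1 : Tendsto (fun w : ℂ => ‖w‖) (cocompact ℂ) atTop := by
      simpa using tendsto_norm_cocompact_atTop (E := ℂ)
    have h2 : Tendsto (fun r : ℝ => (Real.exp (-r) : ℂ)) atTop (nhds 0) := by
      have := Real.tendsto_exp_neg_atTop_nhds_zero
      have := (Complex.continuous_ofReal.tendsto (0 : ℝ)).comp this
      simpa [Function.comp_def] using this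
    exact h2.comp h1

noncomputable def gexp1 : C₀(ℂ, ℂ) where
  toFun := fun w => (Real.exp (-(‖w‖)) : ℂ) * w
  continuous_toFun := by
    exact (Complex.continuous_ofReal.comp (Real.continuous_exp.comp
      (continuous_neg.comp continuous_norm))).mul continuous_id
  zero_at_infty' := by
    rw [Metric.tendsto_nhds]
    intro ε hε
    have h1 : Tendsto (fun r : ℝ => r * Real.exp (-r)) atTop (nhds 0) := by
      simpa using Real.tendsto_pow_mul_exp_neg_atTop_nhds_zero 1
    have h2 : Tendsto (fun w : ℂ => ‖w‖) (cocompact ℂ) atTop := by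
      simpa using tendsto_norm_cocompact_atTop (E := ℂ)
    have h3 := (h1.comp h2).eventually (eventually_abs_sub_lt 0 hε)
    filter_upwards [h3] with w hw
    have : dist ((Real.exp (-(‖w‖)) : ℂ) * w) 0
        = ‖w‖ * Real.exp (-(‖w‖)) := by
      rw [dist_zero_right, norm_mul, Complex.norm_real, Real.norm_eq_abs,
        abs_of_nonneg (Real.exp_pos _).le, mul_comm]
    rw [this]
    simpa [abs_of_nonneg (mul_nonneg (norm_nonneg w) (Real.exp_pos _).le)] using hw

lemma gexp_mem : gexp ∈ polarGenerators := by
  refine ⟨0, fun r => (Real.exp (-r) : ℂ), ?_, ?_, by simp, ?_⟩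
  · exact Complex.continuous_ofReal.comp (Real.continuous_exp.comp continuous_neg)
  · have := Real.tendsto_exp_neg_atTop_nhds_zero
    have := (Complex.continuous_ofReal.tendsto (0 : ℝ)).comp this
    simpa [Function.comp_def] using this
  · intro w
    rcases Classical.em (w = 0) with rfl | hw
    · simp [gexp]
    · simp [gexp, if_neg hw]

lemma gexp1_mem : gexp1 ∈ polarGenerators := by
  refine ⟨1, fun r => (r : ℂ) * (Real.exp (-r) : ℂ), ?_, ?_, by simp, ?_⟩
  · exact Complex.continuous_ofReal.mul
      (Complex.continuous_ofReal.comp (Real.continuous_exp.comp continuous_neg))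
  · have h1 : Tendsto (fun r : ℝ => r * Real.exp (-r)) atTop (nhds 0) := by
      simpa using Real.tendsto_pow_mul_exp_neg_atTop_nhds_zero 1
    have := (Complex.continuous_ofReal.tendsto (0 : ℝ)).comp h1
    simpa [Function.comp_def] using this
  · intro w
    rcases Classical.em (w = 0) with rfl | hw
    · simp [gexp1]
    · have habs : (‖w‖ : ℂ) ≠ 0 := by
        simpa using (norm_ne_zero_iff.mpr hw)
      simp only [if_neg hw]
      show (Real.exp (-(‖w‖)) : ℂ) * w = _
      rw [zpow_one]
      field_simp

lemma span_separates (w₁ w₂ : ℂ) (h : w₁ ≠ w₂) :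
    ∃ g ∈ Submodule.span ℂ polarGenerators, g w₁ ≠ g w₂ := by
  by_cases habs : ‖w₁‖ = ‖w₂‖
  · refine ⟨gexp1, Submodule.subset_span gexp1_mem, ?_⟩
    show (Real.exp (-(‖w₁‖)) : ℂ) * w₁ ≠ (Real.exp (-(‖w₂‖)) : ℂ) * w₂
    rw [habs]
    intro hc
    exact h (mul_left_cancel₀ (by simp [Real.exp_ne_zero]) hc)
  · refine ⟨gexp, Submodule.subset_span gexp_mem, ?_⟩
    show (Real.exp (-(‖w₁‖)) : ℂ) ≠ (Real.exp (-(‖w₂‖)) : ℂ)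
    intro hc
    apply habs
    have := Complex.ofReal_injective hc
    have := Real.exp_injective this
    linarith

open OnePoint in
noncomputable def extC (u : C₀(ℂ, ℂ)) : C(OnePoint ℂ, ℂ) :=
  OnePoint.continuousMapMk u.toContinuousMap 0
    (by rw [Filter.coclosedCompact_eq_cocompact]; exact u.zero_at_infty')

@[simp] lemma extC_coe (u : C₀(ℂ, ℂ)) (w : ℂ) : extC u (w : OnePoint ℂ) = u w := rfl

@[simp] lemma extC_infty (u : C₀(ℂ, ℂ)) : extC u (OnePoint.infty) = 0 := rfl

lemma extC_add (u v : C₀(ℂ, ℂ)) : extC (u + v) = extC u + extC v := by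
  ext x
  induction x using OnePoint.rec with
  | infty => simp
  | coe w => simp

lemma extC_smul (c : ℂ) (u : C₀(ℂ, ℂ)) : extC (c • u) = c • extC u := by
  ext x
  induction x using OnePoint.rec with
  | infty => simp
  | coe w => simp

lemma extC_mul (u v : C₀(ℂ, ℂ)) : extC (u * v) = extC u * extC v := by
  ext x
  induction x using OnePoint.rec with
  | infty => simp
  | coe w => simp

lemma extC_star (u : C₀(ℂ, ℂ)) : extC (star u) = star (extC u) := by
  ext x
  induction x using OnePoint.rec with
  | infty => simp
  | coe w => simp

@[simp] lemma extC_zero : extC (0 : C₀(ℂ, ℂ)) = 0 := by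
  ext x
  induction x using OnePoint.rec with
  | infty => simp
  | coe w => simp

@[simp] lemma extC_one_add : extC ((0 : C₀(ℂ, ℂ))) = 0 := extC_zero

noncomputable def Abig : StarSubalgebra ℂ C(OnePoint ℂ, ℂ) :=
  StarAlgebra.adjoin ℂ (extC '' polarGenerators)

lemma extC_span_mem {g : C₀(ℂ, ℂ)} (hg : g ∈ Submodule.span ℂ polarGenerators) :
    extC g ∈ Abig := by
  induction hg using Submodule.span_induction with
  | mem x hx => exact StarAlgebra.subset_adjoin ℂ _ ⟨x, hx, rfl⟩
  | zero => rw [extC_zero]; exact zero_mem _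
  | add x y _ _ hx hy => rw [extC_add]; exact add_mem hx hy
  | smul c x _ hx => rw [extC_smul]; exact SMulMemClass.smul_mem c hx

lemma Abig_decomp {a : C(OnePoint ℂ, ℂ)} (ha : a ∈ Abig) :
    ∃ (c : ℂ) (g : C₀(ℂ, ℂ)), g ∈ Submodule.span ℂ polarGenerators ∧
      a = c • 1 + extC g := by
  induction ha using StarAlgebra.adjoin_induction with
  | mem x hx =>
    obtain ⟨g, hg, rfl⟩ := hx
    exact ⟨0, g, Submodule.subset_span hg, by simp⟩
  | algebraMap r =>
    exact ⟨r, 0, Submodule.zero_mem _, by simp [Algebra.algebraMap_eq_smul_one]⟩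
  | add x y hx hy ihx ihy =>
    obtain ⟨c, g, hg, rfl⟩ := ihx
    obtain ⟨c', g', hg', rfl⟩ := ihy
    refine ⟨c + c', g + g', Submodule.add_mem _ hg hg', ?_⟩
    rw [extC_add, add_smul]
    abel
  | mul x y hx hy ihx ihy =>
    obtain ⟨c, g, hg, rfl⟩ := ihx
    obtain ⟨c', g', hg', rfl⟩ := ihy
    refine ⟨c * c', c • g' + c' • g + g * g',
      Submodule.add_mem _ (Submodule.add_mem _ (Submodule.smul_mem _ _ hg')
        (Submodule.smul_mem _ _ hg)) (span_mul_mem hg hg'), ?_⟩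
    simp only [extC_add, extC_smul, extC_mul]
    simp only [add_mul, mul_add, smul_mul_assoc, mul_smul_comm, one_mul, mul_one, smul_smul,
      smul_add, mul_comm c' c]
    abel
  | star x hx ihx =>
    obtain ⟨c, g, hg, rfl⟩ := ihx
    refine ⟨star c, star g, span_star_mem hg, ?_⟩
    rw [star_add, star_smul, star_one, extC_star]

lemma Abig_sep : (Abig.toSubalgebra).SeparatesPoints := by
  intro x y hxy
  induction x using OnePoint.rec with
  | infty =>
    induction y using OnePoint.rec with
    | infty => exact absurd rfl hxy
    | coe w =>
      refine ⟨_, ⟨extC gexp, extC_span_mem (Submodule.subset_span gexp_mem), rfl⟩, ?_⟩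
      show extC gexp OnePoint.infty ≠ extC gexp (w : OnePoint ℂ)
      rw [extC_infty, extC_coe]
      show (0 : ℂ) ≠ (Real.exp (-(‖w‖)) : ℂ)
      exact fun hc => Real.exp_ne_zero _ (by exact_mod_cast hc.symm)
  | coe w =>
    induction y using OnePoint.rec with
    | infty =>
      refine ⟨_, ⟨extC gexp, extC_span_mem (Submodule.subset_span gexp_mem), rfl⟩, ?_⟩
      show extC gexp (w : OnePoint ℂ) ≠ extC gexp OnePoint.infty
      rw [extC_infty, extC_coe]
      show (Real.exp (-(‖w‖)) : ℂ) ≠ (0 : ℂ)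
      exact fun hc => Real.exp_ne_zero _ (by exact_mod_cast hc)
    | coe w' =>
      have hww : w ≠ w' := fun h => hxy (by rw [h])
      obtain ⟨g, hg, hne⟩ := span_separates w w' hww
      refine ⟨_, ⟨extC g, extC_span_mem hg, rfl⟩, ?_⟩
      show extC g (w : OnePoint ℂ) ≠ extC g (w' : OnePoint ℂ)
      rw [extC_coe, extC_coe]
      exact hne

lemma span_dense :
    Dense ((Submodule.span ℂ polarGenerators : Submodule ℂ C₀(ℂ, ℂ)) : Set C₀(ℂ, ℂ)) := by
  intro h
  rw [Metric.mem_closure_iff]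
  intro ε hε
  have htop := ContinuousMap.starSubalgebra_topologicalClosure_eq_top_of_separatesPoints
    Abig Abig_sep
  have hmem : extC h ∈ closure (Abig : Set C(OnePoint ℂ, ℂ)) := by
    have : extC h ∈ Abig.topologicalClosure := by rw [htop]; trivial
    exact this
  rw [Metric.mem_closure_iff] at hmem
  obtain ⟨a, haA, hdist⟩ := hmem (ε / 2) (by linarith)
  obtain ⟨c, g, hg, rfl⟩ := Abig_decomp haA
  refine ⟨g, hg, ?_⟩
  set a : C(OnePoint ℂ, ℂ) := c • 1 + extC g with ha
  have hc : ‖c‖ ≤ dist (extC h) a := by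
    have h1 : (extC h - a) OnePoint.infty = -c := by
      simp [ha, ContinuousMap.sub_apply, ContinuousMap.smul_apply]
    calc ‖c‖ = ‖(extC h - a) OnePoint.infty‖ := by rw [h1, norm_neg]
      _ ≤ ‖extC h - a‖ := ContinuousMap.norm_coe_le_norm _ _
      _ = dist (extC h) a := (dist_eq_norm _ _).symm
  have key : ∀ w : ℂ, ‖(h - g) w‖ ≤ 2 * dist (extC h) a := by
    intro w
    have h2 : (h - g) w = (extC h - a) (w : OnePoint ℂ) + c := by
      simp [ha, ContinuousMap.sub_apply, ContinuousMap.smul_apply]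
      ring
    rw [h2]
    calc ‖(extC h - a) (w : OnePoint ℂ) + c‖
        ≤ ‖(extC h - a) (w : OnePoint ℂ)‖ + ‖c‖ := norm_add_le _ _
      _ ≤ ‖extC h - a‖ + dist (extC h) a :=
          add_le_add (ContinuousMap.norm_coe_le_norm _ _) hc
      _ = 2 * dist (extC h) a := by rw [← dist_eq_norm]; ring
  have hnorm : dist h g ≤ 2 * dist (extC h) a := by
    rw [dist_eq_norm, ← ZeroAtInftyContinuousMap.norm_toBCF_eq_norm]
    refine BoundedContinuousFunction.norm_le (by positivity) |>.mpr ?_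
    intro w
    exact key w
  exact lt_of_le_of_lt hnorm (by linarith)

/-- The linear span of the functions `g_{f,k}` is a star-subalgebra of `C₀(ℂ, ℂ)` that
separates the points of `ℂ` and is dense in `C₀(ℂ, ℂ)`. -/
theorem polarGenerators_span_dense :
    (∀ a b : C₀(ℂ, ℂ), a ∈ Submodule.span ℂ polarGenerators →
      b ∈ Submodule.span ℂ polarGenerators → a * b ∈ Submodule.span ℂ polarGenerators) ∧
    (∀ a : C₀(ℂ, ℂ), a ∈ Submodule.span ℂ polarGenerators →
      star a ∈ Submodule.span ℂ polarGenerators) ∧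
    (∀ w₁ w₂ : ℂ, w₁ ≠ w₂ →
      ∃ g ∈ Submodule.span ℂ polarGenerators, g w₁ ≠ g w₂) ∧
    Dense ((Submodule.span ℂ polarGenerators : Submodule ℂ C₀(ℂ, ℂ)) : Set C₀(ℂ, ℂ)) := by
  exact ⟨fun _ _ ha hb => span_mul_mem ha hb, fun _ ha => span_star_mem ha,
    span_separates, span_dense⟩
end
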